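/- arXiv:0905.4219 — 7 statements merged into one kernel-verified Lean document; each statement's English description precedes it below -/
import Mathlib

section
/- Consider a GSWF on three alternatives with n voters satisfying the IIA condition, with choice functions f, g, h : {0,1}^n → {0,1} and with the individual preferences distributed according to an even product distribution D(α,β,γ). Then the probability of irrational choice satisfies W(f,g,h) = p₁p₂p₃ + (1−p₁)(1−p₂)(1−p₃) + ⟨⟨f,g⟩⟩_{4α−1} + ⟨⟨g,h⟩⟩_{4β−1} + ⟨⟨h,f⟩⟩_{4γ−1}, where p₁ = E[f], p₂ = E[g], p₃ = E[h] are the expectations of f, g, h under the uniform measure on {0,1}^n. -/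
open Finset Real

noncomputable section

namespace GSWF

/-- Walsh function `r_S(x) = ∏_{i∈S} (2 x_i - 1)` on the discrete cube. -/
def walsh {n : ℕ} (S : Finset (Fin n)) (x : Fin n → Bool) : ℝ :=
  ∏ i ∈ S, (if x i then (1 : ℝ) else -1)

/-- Fourier–Walsh coefficient `f̂(S) = 2^{-n} ∑_x f(x) r_S(x)`. -/
def coeff {n : ℕ} (f : (Fin n → Bool) → ℝ) (S : Finset (Fin n)) : ℝ :=
  (∑ x : Fin n → Bool, f x * walsh S x) / 2 ^ n

/-- Expectation under the uniform measure on the discrete cube. -/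
def expect {n : ℕ} (f : (Fin n → Bool) → ℝ) : ℝ :=
  (∑ x : Fin n → Bool, f x) / 2 ^ n

/-- Biased inner product `⟨⟨f,g⟩⟩_δ = ∑_{S ≠ ∅} f̂(S) ĝ(S) δ^{|S|}`. -/
def bip {n : ℕ} (δ : ℝ) (f g : (Fin n → Bool) → ℝ) : ℝ :=
  ∑ S ∈ Finset.univ.filter (fun S : Finset (Fin n) => S ≠ ∅),
    coeff f S * coeff g S * δ ^ S.card

/-- Probability of a single voter's preference triple under `D(α,β,γ)`. -/
def prTriple (α β γ : ℝ) : Bool → Bool → Bool → ℝ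
  | true, true, false => α
  | false, false, true => α
  | false, true, true => β
  | true, false, false => β
  | true, false, true => γ
  | false, true, false => γ
  | _, _, _ => 0

/-- Probability of a profile under the even product distribution `D(α,β,γ)`. -/
def prProfile {n : ℕ} (α β γ : ℝ) (x y z : Fin n → Bool) : ℝ :=
  ∏ i, prTriple α β γ (x i) (y i) (z i)

/-- Probability of an irrational outcome `W(f,g,h)` under `D(α,β,γ)`. -/
def W {n : ℕ} (α β γ : ℝ) (f g h : (Fin n → Bool) → ℝ) : ℝ :=
  ∑ x : Fin n → Bool, ∑ y : Fin n → Bool, ∑ z : Fin n → Bool,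
    prProfile α β γ x y z *
      (f x * g y * h z + (1 - f x) * (1 - g y) * (1 - h z))

/-- A real-valued function on the cube that takes only the values 0 and 1. -/
def IsBooleanFn {n : ℕ} (f : (Fin n → Bool) → ℝ) : Prop :=
  ∀ x, f x = 0 ∨ f x = 1

/-- Monotone increasing function on the discrete cube. -/
def MonotoneCube {n : ℕ} (f : (Fin n → Bool) → ℝ) : Prop :=
  ∀ x y : Fin n → Bool, (∀ i, x i ≤ y i) → f x ≤ f y

/-- Monotone decreasing function on the discrete cube. -/
def AntitoneCube {n : ℕ} (f : (Fin n → Bool) → ℝ) : Prop :=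
  ∀ x y : Fin n → Bool, (∀ i, x i ≤ y i) → f y ≤ f x

/-- Invariance under a transitive group of permutations of the coordinates. -/
def TransitiveSymmetric {n : ℕ} (f : (Fin n → Bool) → ℝ) : Prop :=
  ∃ G : Subgroup (Equiv.Perm (Fin n)),
    (∀ i j : Fin n, ∃ σ ∈ G, σ i = j) ∧
    ∀ σ ∈ G, ∀ x : Fin n → Bool, f (x ∘ σ) = f x

/-- The majority function: 1 iff more than half of the coordinates are 1. -/
def maj (n : ℕ) (x : Fin n → Bool) : ℝ :=
  if n < 2 * (Finset.univ.filter (fun i => x i = true)).card then 1 else 0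

/-- The dual function `f'(x) = 1 - f(1-x)`. -/
def dualFn {n : ℕ} (f : (Fin n → Bool) → ℝ) (x : Fin n → Bool) : ℝ :=
  1 - f (fun i => !(x i))

/-- The Bonamie–Beckner noise operator `T_δ`. -/
def Tnoise {n : ℕ} (δ : ℝ) (f : (Fin n → Bool) → ℝ) (x : Fin n → Bool) : ℝ :=
  ∑ S : Finset (Fin n), δ ^ S.card * coeff f S * walsh S x

/-- The AND function on the discrete cube. -/
def andFn (n : ℕ) (x : Fin n → Bool) : ℝ :=
  if ∀ i, x i = true then 1 else 0

/-- The OR function on the discrete cube (the dual of AND). -/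
def orFn (n : ℕ) (x : Fin n → Bool) : ℝ :=
  if ∃ i, x i = true then 1 else 0



/-! ### Auxiliary machinery -/

def chi (a : Bool) : ℝ := if a then 1 else -1

lemma walsh_eq_prod {n : ℕ} (S : Finset (Fin n)) (x : Fin n → Bool) :
    walsh S x = ∏ i : Fin n, (if i ∈ S then chi (x i) else 1) := by
  rw [Finset.prod_ite_mem, Finset.univ_inter]; rfl

lemma walsh_ortho {n : ℕ} (x y : Fin n → Bool) :
    ∑ S : Finset (Fin n), walsh S x * walsh S y = if x = y then (2:ℝ)^n else 0 := by
  have h1 : ∀ S : Finset (Fin n), walsh S x * walsh S y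
      = ∏ i ∈ S, (chi (x i) * chi (y i)) := by
    intro S; rw [Finset.prod_mul_distrib]; rfl
  simp only [h1]
  have h2 : ∑ S : Finset (Fin n), ∏ i ∈ S, (chi (x i) * chi (y i))
      = ∏ i : Fin n, (chi (x i) * chi (y i) + 1) := by
    rw [Finset.prod_add]
    simp [Finset.powerset_univ]
  rw [h2]
  by_cases hxy : x = y
  · subst hxy
    simp only [if_pos rfl]
    have : ∀ i : Fin n, chi (x i) * chi (x i) + 1 = 2 := by
      intro i; cases x i <;> simp [chi] <;> ring
    rw [Finset.prod_congr rfl fun i _ => this i, Finset.prod_const]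
    simp
  · rw [if_neg hxy]
    obtain ⟨i, hi⟩ : ∃ i, x i ≠ y i := by
      by_contra hc; push_neg at hc; exact hxy (funext hc)
    apply Finset.prod_eq_zero (Finset.mem_univ i)
    cases hx : x i <;> cases hy : y i <;> simp_all [chi]

lemma inversion {n : ℕ} (f : (Fin n → Bool) → ℝ) (x : Fin n → Bool) :
    ∑ S : Finset (Fin n), coeff f S * walsh S x = f x := by
  simp only [coeff, div_mul_eq_mul_div, ← Finset.sum_div, Finset.sum_mul]
  rw [Finset.sum_comm]
  have : ∀ y : Fin n → Bool, ∑ S : Finset (Fin n), f y * walsh S y * walsh S x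
      = f y * (if y = x then (2:ℝ)^n else 0) := by
    intro y
    rw [← walsh_ortho y x, Finset.mul_sum]
    exact Finset.sum_congr rfl fun S _ => by ring
  rw [Finset.sum_congr rfl fun y _ => this y]
  simp only [mul_ite, mul_zero]
  rw [Finset.sum_ite_eq' Finset.univ x (fun y => f y * 2^n)]
  simp

lemma walsh_empty {n : ℕ} (x : Fin n → Bool) : walsh (∅ : Finset (Fin n)) x = 1 := by
  simp [walsh]

lemma coeff_empty {n : ℕ} (f : (Fin n → Bool) → ℝ) : coeff f ∅ = expect f := by
  simp [coeff, expect, walsh]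

lemma prod_sum3 {n : ℕ} (F : Fin n → Bool → Bool → Bool → ℝ) :
    ∑ p : (Fin n → Bool) × (Fin n → Bool) × (Fin n → Bool),
      ∏ i, F i (p.1 i) (p.2.1 i) (p.2.2 i)
    = ∏ i, ∑ a : Bool, ∑ b : Bool, ∑ c : Bool, F i a b c := by
  have h1 : ∀ i, (∑ a : Bool, ∑ b : Bool, ∑ c : Bool, F i a b c)
      = ∑ w : Bool × Bool × Bool, F i w.1 w.2.1 w.2.2 := by
    intro i
    rw [Fintype.sum_prod_type]
    exact Finset.sum_congr rfl fun a _ =>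
      (Fintype.sum_prod_type (fun w : Bool × Bool => F i a w.1 w.2)).symm
  rw [Finset.prod_congr rfl fun i _ => h1 i]
  rw [show (fun i => ∑ w : Bool × Bool × Bool, F i w.1 w.2.1 w.2.2)
      = fun i => ∑ w ∈ (univ : Finset (Bool × Bool × Bool)), F i w.1 w.2.1 w.2.2 from rfl]
  rw [Finset.prod_univ_sum]
  rw [Fintype.piFinset_univ]
  let e : ((Fin n → Bool) × (Fin n → Bool) × (Fin n → Bool)) ≃ (Fin n → Bool × Bool × Bool) :=
    ((Equiv.arrowProdEquivProdArrow (Fin n) (fun _ => Bool) (fun _ => Bool × Bool)).trans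
      (Equiv.prodCongr (Equiv.refl _) (Equiv.arrowProdEquivProdArrow (Fin n) (fun _ => Bool) (fun _ => Bool)))).symm
  exact Fintype.sum_equiv e _ _ fun p => rfl

lemma mom_eval {α β γ : ℝ} (hsum : α + β + γ = 1/2)
    (s t u : Prop) [Decidable s] [Decidable t] [Decidable u] :
    (∑ a : Bool, ∑ b : Bool, ∑ c : Bool, prTriple α β γ a b c *
      (if s then chi a else 1) * (if t then chi b else 1) * (if u then chi c else 1))
    = if s then (if t then (if u then 0 else 4*α-1) else (if u then 4*γ-1 else 0))
      else (if t then (if u then 4*β-1 else 0) else (if u then 0 else 1)) := by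
  by_cases hs : s <;> by_cases ht : t <;> by_cases hu : u <;>
    simp [hs, ht, hu, prTriple, chi, Fintype.sum_bool] <;> linarith

lemma prod_case1 {n : ℕ} (S : Finset (Fin n)) :
    (∏ i : Fin n, if i ∈ S then (0:ℝ) else 1) = if S = ∅ then 1 else 0 := by
  by_cases h : S = ∅
  · simp [h]
  · rw [if_neg h]
    obtain ⟨i, hi⟩ := Finset.nonempty_iff_ne_empty.2 h
    exact Finset.prod_eq_zero (Finset.mem_univ i) (by simp [hi])

lemma prod_case2 {n : ℕ} (S T : Finset (Fin n)) (δ : ℝ) :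
    (∏ i : Fin n, if i ∈ S then (if i ∈ T then δ else 0) else (if i ∈ T then 0 else 1))
    = if S = T then δ ^ S.card else 0 := by
  by_cases h : S = T
  · subst h
    rw [if_pos rfl]
    have : ∀ i : Fin n, (if i ∈ S then (if i ∈ S then δ else 0) else (if i ∈ S then 0 else 1))
        = if i ∈ S then δ else 1 := by intro i; by_cases hi : i ∈ S <;> simp [hi]
    rw [Finset.prod_congr rfl fun i _ => this i, Finset.prod_ite_mem, Finset.univ_inter,
      Finset.prod_const]
  · rw [if_neg h]
    have hex : ∃ i, (i ∈ S ∧ i ∉ T) ∨ (i ∉ S ∧ i ∈ T) := by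
      by_contra hc; push_neg at hc
      exact h (Finset.ext fun i => by
        have := hc i; constructor <;> intro hm <;> by_contra hn <;> tauto)
    obtain ⟨i, hi⟩ := hex
    refine Finset.prod_eq_zero (Finset.mem_univ i) ?_
    rcases hi with ⟨h1, h2⟩ | ⟨h1, h2⟩ <;> simp [h1, h2]

/-- Master moment lemma: sum of profile probability times three Walsh functions factorizes. -/
lemma key {n : ℕ} (α β γ : ℝ) (S T U : Finset (Fin n)) :
    ∑ p : (Fin n → Bool) × (Fin n → Bool) × (Fin n → Bool),
      prProfile α β γ p.1 p.2.1 p.2.2 * walsh S p.1 * walsh T p.2.1 * walsh U p.2.2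
    = ∏ i : Fin n, ∑ a : Bool, ∑ b : Bool, ∑ c : Bool, prTriple α β γ a b c *
        (if i ∈ S then chi a else 1) * (if i ∈ T then chi b else 1) *
        (if i ∈ U then chi c else 1) := by
  rw [← prod_sum3]
  refine Finset.sum_congr rfl fun p _ => ?_
  rw [prProfile, walsh_eq_prod, walsh_eq_prod, walsh_eq_prod,
    ← Finset.prod_mul_distrib, ← Finset.prod_mul_distrib, ← Finset.prod_mul_distrib]

lemma key_const {n : ℕ} {α β γ : ℝ} (hsum : α + β + γ = 1/2) :
    ∑ p : (Fin n → Bool) × (Fin n → Bool) × (Fin n → Bool),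
      prProfile α β γ p.1 p.2.1 p.2.2 = 1 := by
  have h := key (n := n) α β γ ∅ ∅ ∅
  simp only [walsh_empty, mul_one] at h
  rw [h]
  rw [Finset.prod_congr rfl fun i _ => mom_eval hsum (i ∈ (∅ : Finset (Fin n)))
    (i ∈ (∅ : Finset (Fin n))) (i ∈ (∅ : Finset (Fin n)))]
  simp

lemma key_x {n : ℕ} {α β γ : ℝ} (hsum : α + β + γ = 1/2) (S : Finset (Fin n)) :
    ∑ p : (Fin n → Bool) × (Fin n → Bool) × (Fin n → Bool),
      prProfile α β γ p.1 p.2.1 p.2.2 * walsh S p.1 = if S = ∅ then 1 else 0 := by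
  have h := key (n := n) α β γ S ∅ ∅
  simp only [walsh_empty, mul_one] at h
  rw [h, Finset.prod_congr rfl fun i _ => mom_eval hsum (i ∈ S)
    (i ∈ (∅ : Finset (Fin n))) (i ∈ (∅ : Finset (Fin n)))]
  simp only [Finset.notMem_empty, if_false]
  exact prod_case1 S

lemma key_y {n : ℕ} {α β γ : ℝ} (hsum : α + β + γ = 1/2) (T : Finset (Fin n)) :
    ∑ p : (Fin n → Bool) × (Fin n → Bool) × (Fin n → Bool),
      prProfile α β γ p.1 p.2.1 p.2.2 * walsh T p.2.1 = if T = ∅ then 1 else 0 := by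
  have h := key (n := n) α β γ ∅ T ∅
  simp only [walsh_empty, mul_one, one_mul] at h
  rw [h, Finset.prod_congr rfl fun i _ => mom_eval hsum (i ∈ (∅ : Finset (Fin n)))
    (i ∈ T) (i ∈ (∅ : Finset (Fin n)))]
  simp only [Finset.notMem_empty, if_false]
  exact prod_case1 T

lemma key_z {n : ℕ} {α β γ : ℝ} (hsum : α + β + γ = 1/2) (U : Finset (Fin n)) :
    ∑ p : (Fin n → Bool) × (Fin n → Bool) × (Fin n → Bool),
      prProfile α β γ p.1 p.2.1 p.2.2 * walsh U p.2.2 = if U = ∅ then 1 else 0 := by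
  have h := key (n := n) α β γ ∅ ∅ U
  simp only [walsh_empty, mul_one, one_mul] at h
  rw [h, Finset.prod_congr rfl fun i _ => mom_eval hsum (i ∈ (∅ : Finset (Fin n)))
    (i ∈ (∅ : Finset (Fin n))) (i ∈ U)]
  simp only [Finset.notMem_empty, if_false]
  exact prod_case1 U

lemma key_xy {n : ℕ} {α β γ : ℝ} (hsum : α + β + γ = 1/2) (S T : Finset (Fin n)) :
    ∑ p : (Fin n → Bool) × (Fin n → Bool) × (Fin n → Bool),
      prProfile α β γ p.1 p.2.1 p.2.2 * walsh S p.1 * walsh T p.2.1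
    = if S = T then (4*α-1) ^ S.card else 0 := by
  have h := key (n := n) α β γ S T ∅
  simp only [walsh_empty, mul_one] at h
  rw [h, Finset.prod_congr rfl fun i _ =>
    mom_eval hsum (i ∈ S) (i ∈ T) (i ∈ (∅ : Finset (Fin n)))]
  simp only [Finset.notMem_empty, if_false]
  exact prod_case2 S T _

lemma key_yz {n : ℕ} {α β γ : ℝ} (hsum : α + β + γ = 1/2) (T U : Finset (Fin n)) :
    ∑ p : (Fin n → Bool) × (Fin n → Bool) × (Fin n → Bool),
      prProfile α β γ p.1 p.2.1 p.2.2 * walsh T p.2.1 * walsh U p.2.2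
    = if T = U then (4*β-1) ^ T.card else 0 := by
  have h := key (n := n) α β γ ∅ T U
  simp only [walsh_empty, mul_one, one_mul] at h
  rw [h, Finset.prod_congr rfl fun i _ =>
    mom_eval hsum (i ∈ (∅ : Finset (Fin n))) (i ∈ T) (i ∈ U)]
  simp only [Finset.notMem_empty, if_false]
  exact prod_case2 T U _

lemma key_xz {n : ℕ} {α β γ : ℝ} (hsum : α + β + γ = 1/2) (S U : Finset (Fin n)) :
    ∑ p : (Fin n → Bool) × (Fin n → Bool) × (Fin n → Bool),
      prProfile α β γ p.1 p.2.1 p.2.2 * walsh S p.1 * walsh U p.2.2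
    = if S = U then (4*γ-1) ^ S.card else 0 := by
  have h : ∀ p : (Fin n → Bool) × (Fin n → Bool) × (Fin n → Bool),
      prProfile α β γ p.1 p.2.1 p.2.2 * walsh S p.1 * walsh U p.2.2
      = prProfile α β γ p.1 p.2.1 p.2.2 * walsh S p.1 * walsh (∅ : Finset (Fin n)) p.2.1
        * walsh U p.2.2 := by
    intro p; simp [walsh]
  rw [Finset.sum_congr rfl fun p _ => h p, key α β γ S ∅ U,
    Finset.prod_congr rfl fun i _ => mom_eval hsum (i ∈ S) (i ∈ (∅ : Finset (Fin n))) (i ∈ U)]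
  simp only [Finset.notMem_empty, if_false]
  exact prod_case2 S U _

/-- Split a sum over all subsets into the empty-set term and the rest. -/
lemma sum_split {n : ℕ} (F : Finset (Fin n) → ℝ) :
    ∑ S : Finset (Fin n), F S
      = F ∅ + ∑ S ∈ Finset.univ.filter (fun S : Finset (Fin n) => S ≠ ∅), F S := by
  rw [Finset.filter_ne']
  exact (Finset.add_sum_erase _ F (Finset.mem_univ ∅)).symm

lemma pair_general {n : ℕ} (α β γ : ℝ) (δ : ℝ)
    (f g : (Fin n → Bool) → ℝ)
    (u v : ((Fin n → Bool) × (Fin n → Bool) × (Fin n → Bool)) → (Fin n → Bool))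
    (hkey : ∀ S T : Finset (Fin n),
      (∑ p : (Fin n → Bool) × (Fin n → Bool) × (Fin n → Bool),
        prProfile α β γ p.1 p.2.1 p.2.2 * walsh S (u p) * walsh T (v p))
        = if S = T then δ ^ S.card else 0) :
    ∑ p : (Fin n → Bool) × (Fin n → Bool) × (Fin n → Bool),
      prProfile α β γ p.1 p.2.1 p.2.2 * f (u p) * g (v p)
    = expect f * expect g + bip δ f g := by
  have step1 : ∀ p : (Fin n → Bool) × (Fin n → Bool) × (Fin n → Bool),
      prProfile α β γ p.1 p.2.1 p.2.2 * f (u p) * g (v p)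
      = ∑ S : Finset (Fin n), ∑ T : Finset (Fin n),
          coeff f S * coeff g T *
            (prProfile α β γ p.1 p.2.1 p.2.2 * walsh S (u p) * walsh T (v p)) := by
    intro p
    conv_lhs => rw [← inversion f (u p), ← inversion g (v p)]
    rw [mul_assoc, Finset.sum_mul_sum, Finset.mul_sum]
    refine Finset.sum_congr rfl fun S _ => ?_
    rw [Finset.mul_sum]
    exact Finset.sum_congr rfl fun T _ => by ring
  rw [Finset.sum_congr rfl fun p _ => step1 p, Finset.sum_comm]
  have step2 : ∀ S : Finset (Fin n),
      (∑ p : (Fin n → Bool) × (Fin n → Bool) × (Fin n → Bool), ∑ T : Finset (Fin n),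
        coeff f S * coeff g T *
          (prProfile α β γ p.1 p.2.1 p.2.2 * walsh S (u p) * walsh T (v p)))
      = coeff f S * coeff g S * δ ^ S.card := by
    intro S
    rw [Finset.sum_comm]
    have : ∀ T : Finset (Fin n),
        (∑ p : (Fin n → Bool) × (Fin n → Bool) × (Fin n → Bool),
          coeff f S * coeff g T *
            (prProfile α β γ p.1 p.2.1 p.2.2 * walsh S (u p) * walsh T (v p)))
        = coeff f S * coeff g T * (if S = T then δ ^ S.card else 0) := by
      intro T
      rw [← Finset.mul_sum, hkey S T]
    rw [Finset.sum_congr rfl fun T _ => this T]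
    simp only [mul_ite, mul_zero]
    rw [Finset.sum_ite_eq Finset.univ S (fun T => coeff f S * coeff g T * δ ^ S.card)]
    simp
  rw [Finset.sum_congr rfl fun S _ => step2 S, sum_split, coeff_empty, coeff_empty]
  simp [bip]


/-- the Fourier-theoretic formula for the probability of an
irrational choice under an even product distribution `D(α,β,γ)`. -/
theorem irrational_choice_formula {n : ℕ} (hn : 1 ≤ n)
    (α β γ : ℝ) (hα : 0 ≤ α) (hβ : 0 ≤ β) (hγ : 0 ≤ γ)
    (hsum : α + β + γ = 1 / 2)
    (f g h : (Fin n → Bool) → ℝ)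
    (hf : IsBooleanFn f) (hg : IsBooleanFn g) (hh : IsBooleanFn h) :
    W α β γ f g h =
      expect f * expect g * expect h +
        (1 - expect f) * (1 - expect g) * (1 - expect h) +
        bip (4 * α - 1) f g + bip (4 * β - 1) g h + bip (4 * γ - 1) h f := by
  have hW : W α β γ f g h
      = ∑ p : (Fin n → Bool) × (Fin n → Bool) × (Fin n → Bool),
          prProfile α β γ p.1 p.2.1 p.2.2 *
            (f p.1 * g p.2.1 * h p.2.2 + (1 - f p.1) * (1 - g p.2.1) * (1 - h p.2.2)) := by
    rw [W, Fintype.sum_prod_type]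
    exact Finset.sum_congr rfl fun x _ => by rw [Fintype.sum_prod_type]
  have hpt : ∀ p : (Fin n → Bool) × (Fin n → Bool) × (Fin n → Bool),
      prProfile α β γ p.1 p.2.1 p.2.2 *
        (f p.1 * g p.2.1 * h p.2.2 + (1 - f p.1) * (1 - g p.2.1) * (1 - h p.2.2))
      = prProfile α β γ p.1 p.2.1 p.2.2 +
          (prProfile α β γ p.1 p.2.1 p.2.2 * f p.1 * g p.2.1 +
            (prProfile α β γ p.1 p.2.1 p.2.2 * g p.2.1 * h p.2.2 +
              prProfile α β γ p.1 p.2.1 p.2.2 * f p.1 * h p.2.2)) -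
          (prProfile α β γ p.1 p.2.1 p.2.2 * f p.1 +
            (prProfile α β γ p.1 p.2.1 p.2.2 * g p.2.1 +
              prProfile α β γ p.1 p.2.1 p.2.2 * h p.2.2)) := fun p => by ring
  rw [hW, Finset.sum_congr rfl fun p _ => hpt p]
  rw [Finset.sum_sub_distrib, Finset.sum_add_distrib, Finset.sum_add_distrib,
    Finset.sum_add_distrib, Finset.sum_add_distrib, Finset.sum_add_distrib]
  have e1 : ∑ p : (Fin n → Bool) × (Fin n → Bool) × (Fin n → Bool),
      prProfile α β γ p.1 p.2.1 p.2.2 * f p.1 = expect f := by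
    have h1 : ∀ p : (Fin n → Bool) × (Fin n → Bool) × (Fin n → Bool),
        prProfile α β γ p.1 p.2.1 p.2.2 * f p.1
        = ∑ S : Finset (Fin n),
            coeff f S * (prProfile α β γ p.1 p.2.1 p.2.2 * walsh S p.1) := by
      intro p
      conv_lhs => rw [← inversion f p.1]
      rw [Finset.mul_sum]
      exact Finset.sum_congr rfl fun S _ => by ring
    rw [Finset.sum_congr rfl fun p _ => h1 p, Finset.sum_comm]
    have h2 : ∀ S : Finset (Fin n),
        (∑ p : (Fin n → Bool) × (Fin n → Bool) × (Fin n → Bool),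
          coeff f S * (prProfile α β γ p.1 p.2.1 p.2.2 * walsh S p.1))
        = coeff f S * (if S = ∅ then 1 else 0) := by
      intro S; rw [← Finset.mul_sum, key_x hsum S]
    rw [Finset.sum_congr rfl fun S _ => h2 S]
    simp only [mul_ite, mul_one, mul_zero]
    rw [Finset.sum_ite_eq' Finset.univ ∅ (fun S => coeff f S)]
    simp [coeff_empty]
  have e2 : ∑ p : (Fin n → Bool) × (Fin n → Bool) × (Fin n → Bool),
      prProfile α β γ p.1 p.2.1 p.2.2 * g p.2.1 = expect g := by
    have h1 : ∀ p : (Fin n → Bool) × (Fin n → Bool) × (Fin n → Bool),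
        prProfile α β γ p.1 p.2.1 p.2.2 * g p.2.1
        = ∑ S : Finset (Fin n),
            coeff g S * (prProfile α β γ p.1 p.2.1 p.2.2 * walsh S p.2.1) := by
      intro p
      conv_lhs => rw [← inversion g p.2.1]
      rw [Finset.mul_sum]
      exact Finset.sum_congr rfl fun S _ => by ring
    rw [Finset.sum_congr rfl fun p _ => h1 p, Finset.sum_comm]
    have h2 : ∀ S : Finset (Fin n),
        (∑ p : (Fin n → Bool) × (Fin n → Bool) × (Fin n → Bool),
          coeff g S * (prProfile α β γ p.1 p.2.1 p.2.2 * walsh S p.2.1))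
        = coeff g S * (if S = ∅ then 1 else 0) := by
      intro S; rw [← Finset.mul_sum, key_y hsum S]
    rw [Finset.sum_congr rfl fun S _ => h2 S]
    simp only [mul_ite, mul_one, mul_zero]
    rw [Finset.sum_ite_eq' Finset.univ ∅ (fun S => coeff g S)]
    simp [coeff_empty]
  have e3 : ∑ p : (Fin n → Bool) × (Fin n → Bool) × (Fin n → Bool),
      prProfile α β γ p.1 p.2.1 p.2.2 * h p.2.2 = expect h := by
    have h1 : ∀ p : (Fin n → Bool) × (Fin n → Bool) × (Fin n → Bool),
        prProfile α β γ p.1 p.2.1 p.2.2 * h p.2.2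
        = ∑ S : Finset (Fin n),
            coeff h S * (prProfile α β γ p.1 p.2.1 p.2.2 * walsh S p.2.2) := by
      intro p
      conv_lhs => rw [← inversion h p.2.2]
      rw [Finset.mul_sum]
      exact Finset.sum_congr rfl fun S _ => by ring
    rw [Finset.sum_congr rfl fun p _ => h1 p, Finset.sum_comm]
    have h2 : ∀ S : Finset (Fin n),
        (∑ p : (Fin n → Bool) × (Fin n → Bool) × (Fin n → Bool),
          coeff h S * (prProfile α β γ p.1 p.2.1 p.2.2 * walsh S p.2.2))
        = coeff h S * (if S = ∅ then 1 else 0) := by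
      intro S; rw [← Finset.mul_sum, key_z hsum S]
    rw [Finset.sum_congr rfl fun S _ => h2 S]
    simp only [mul_ite, mul_one, mul_zero]
    rw [Finset.sum_ite_eq' Finset.univ ∅ (fun S => coeff h S)]
    simp [coeff_empty]
  have e12 : ∑ p : (Fin n → Bool) × (Fin n → Bool) × (Fin n → Bool),
      prProfile α β γ p.1 p.2.1 p.2.2 * f p.1 * g p.2.1
      = expect f * expect g + bip (4*α-1) f g :=
    pair_general α β γ (4*α-1) f g (fun p => p.1) (fun p => p.2.1)
      (fun S T => key_xy hsum S T)
  have e23 : ∑ p : (Fin n → Bool) × (Fin n → Bool) × (Fin n → Bool),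
      prProfile α β γ p.1 p.2.1 p.2.2 * g p.2.1 * h p.2.2
      = expect g * expect h + bip (4*β-1) g h :=
    pair_general α β γ (4*β-1) g h (fun p => p.2.1) (fun p => p.2.2)
      (fun S T => key_yz hsum S T)
  have e13 : ∑ p : (Fin n → Bool) × (Fin n → Bool) × (Fin n → Bool),
      prProfile α β γ p.1 p.2.1 p.2.2 * f p.1 * h p.2.2
      = expect f * expect h + bip (4*γ-1) f h :=
    pair_general α β γ (4*γ-1) f h (fun p => p.1) (fun p => p.2.2)
      (fun S T => key_xz hsum S T)
  have hbip : bip (4*γ-1) f h = bip (4 * γ - 1) h f := by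
    unfold bip
    exact Finset.sum_congr rfl fun S _ => by ring
  rw [e1, e2, e3, e12, e23, e13, key_const hsum, hbip]
  ring

end GSWF
end
end

section
/- For every integer k ≥ 1 and all real numbers x, y, z with −1 ≤ x, y, z ≤ 1 and x + y + z = 1, one has x³ + y³ + z³ ≥ x^{2k+1} + y^{2k+1} + z^{2k+1}. -/
open Finset Real

noncomputable section

namespace GSWF

lemma aux_core (n : ℕ) (x y w : ℝ) (hw0 : 0 ≤ w) (hwx : w ≤ x) (hwy : w ≤ y)
    (hx1 : x ≤ 1) (hy1 : y ≤ 1) (hsum : x + y = 1 + w) :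
    w ^ n * (1 - w ^ 2) ≤ x ^ n * (1 - x ^ 2) + y ^ n * (1 - y ^ 2) := by
  have hx0 : 0 ≤ x := le_trans hw0 hwx
  have hy0 : 0 ≤ y := le_trans hw0 hwy
  have hpx := pow_le_pow_left₀ hw0 hwx n
  have hpy := pow_le_pow_left₀ hw0 hwy n
  have h1 : w ^ n * (1 + w) ≤ x ^ n * (1 + x) := by
    nlinarith [pow_nonneg hw0 n, pow_nonneg hx0 n]
  have h2 : w ^ n * (1 + w) ≤ y ^ n * (1 + y) := by
    nlinarith [pow_nonneg hw0 n, pow_nonneg hy0 n]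
  have h3 : w ^ n * (x + y) = w ^ n * (1 + w) := by rw [hsum]
  have h4 : w ^ (n + 1) * (x + y) = w ^ (n + 1) * (1 + w) := by rw [hsum]
  nlinarith [mul_nonneg (sub_nonneg.2 h1) (sub_nonneg.2 hx1),
    mul_nonneg (sub_nonneg.2 h2) (sub_nonneg.2 hy1), h3, h4]

lemma step_neg (n : ℕ) (hn : Odd n) (x y z : ℝ) (hx2 : x ≤ 1) (hy2 : y ≤ 1)
    (hz1 : -1 ≤ z) (hz0 : z ≤ 0) (hsum : x + y + z = 1) :
    x ^ (n + 2) + y ^ (n + 2) + z ^ (n + 2) ≤ x ^ n + y ^ n + z ^ n := by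
  set w : ℝ := -z with hw
  have hzw : z = -w := by simp [hw]
  have hw0 : 0 ≤ w := by linarith
  have hwx : w ≤ x := by linarith
  have hwy : w ≤ y := by linarith
  have key := aux_core n x y w hw0 hwx hwy hx2 hy2 (by linarith)
  have hn2 : Odd (n + 2) := hn.add_even (by norm_num)
  have e1 : z ^ n = -(w ^ n) := by rw [hzw, hn.neg_pow]
  have e2 : z ^ (n + 2) = -(w ^ (n + 2)) := by rw [hzw, hn2.neg_pow]
  have ex : x ^ n * (1 - x ^ 2) = x ^ n - x ^ (n + 2) := by ring
  have ey : y ^ n * (1 - y ^ 2) = y ^ n - y ^ (n + 2) := by ring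
  have ew : w ^ n * (1 - w ^ 2) = w ^ n - w ^ (n + 2) := by ring
  rw [ex, ey, ew] at key
  linarith

lemma decreasing (n : ℕ) (hn : Odd n) (x y z : ℝ)
    (hx₁ : -1 ≤ x) (hx₂ : x ≤ 1) (hy₁ : -1 ≤ y) (hy₂ : y ≤ 1)
    (hz₁ : -1 ≤ z) (hz₂ : z ≤ 1) (hsum : x + y + z = 1) :
    x ^ (n + 2) + y ^ (n + 2) + z ^ (n + 2) ≤ x ^ n + y ^ n + z ^ n := by
  rcases le_or_gt 0 x with hx | hx
  · rcases le_or_gt 0 y with hy | hy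
    · rcases le_or_gt 0 z with hz | hz
      · have := pow_le_pow_of_le_one hx hx₂ (Nat.le_add_right n 2)
        have := pow_le_pow_of_le_one hy hy₂ (Nat.le_add_right n 2)
        have := pow_le_pow_of_le_one hz hz₂ (Nat.le_add_right n 2)
        linarith
      · linarith [step_neg n hn x y z hx₂ hy₂ hz₁ hz.le hsum]
    · have hz : 0 ≤ z := by nlinarith
      linarith [step_neg n hn z x y hz₂ hx₂ hy₁ hy.le (by linarith)]
  · have hy : 0 ≤ y := by nlinarith
    have hz : 0 ≤ z := by nlinarith
    linarith [step_neg n hn y z x hy₂ hz₂ hx₁ hx.le (by linarith)]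

/-- for `k ≥ 1` and `x,y,z ∈ [-1,1]` with `x + y + z = 1`,
`x³ + y³ + z³ ≥ x^{2k+1} + y^{2k+1} + z^{2k+1}`. -/
theorem odd_power_sum_inequality (k : ℕ) (hk : 1 ≤ k) (x y z : ℝ)
    (hx₁ : -1 ≤ x) (hx₂ : x ≤ 1) (hy₁ : -1 ≤ y) (hy₂ : y ≤ 1)
    (hz₁ : -1 ≤ z) (hz₂ : z ≤ 1) (hsum : x + y + z = 1) :
    x ^ (2 * k + 1) + y ^ (2 * k + 1) + z ^ (2 * k + 1) ≤
      x ^ 3 + y ^ 3 + z ^ 3 := by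
  induction k, hk using Nat.le_induction with
  | base => norm_num
  | succ n hn ih =>
    have hodd : Odd (2 * n + 1) := ⟨n, by ring⟩
    have hstep := decreasing (2 * n + 1) hodd x y z hx₁ hx₂ hy₁ hy₂ hz₁ hz₂ hsum
    have he : 2 * (n + 1) + 1 = 2 * n + 1 + 2 := by ring
    rw [he]
    linarith


end GSWF
end
end

section
/- Consider a GSWF on three alternatives with n voters satisfying the IIA condition, whose choice functions f, g, h : {0,1}^n → {0,1} are monotone increasing and balanced (E[f] = E[g] = E[h] = 1/2). If the individual preferences are independent and uniformly distributed (i.e., distributed according to D(1/6,1/6,1/6)), then the probability of a rational choice is at least 3/4; equivalently, W(f,g,h) ≤ 1/4. -/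
open Finset Real

noncomputable section

namespace GSWF

/-! ### Auxiliary material for the proof -/

/-- Pairwise marginal of a single voter's triple under `D(1/6,1/6,1/6)`. -/
def nu (a b : Bool) : ℝ := if a = b then 1/6 else 1/3

lemma nu_nonneg (a b : Bool) : 0 ≤ nu a b := by cases a <;> cases b <;> norm_num [nu]

lemma nu_comm (a b : Bool) : nu a b = nu b a := by cases a <;> cases b <;> rfl

lemma sum_fun_prod {n : ℕ} (t : Fin n → Bool → ℝ) :
    ∑ z : Fin n → Bool, ∏ i, t i (z i) = ∏ i, ∑ b : Bool, t i b := by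
  rw [Fintype.prod_sum]

lemma sum_prTriple_z (a b : Bool) : ∑ c : Bool, prTriple (1/6) (1/6) (1/6) a b c = nu a b := by
  cases a <;> cases b <;> simp [prTriple, nu] <;> norm_num

lemma sum_prTriple_y (a c : Bool) : ∑ b : Bool, prTriple (1/6) (1/6) (1/6) a b c = nu a c := by
  cases a <;> cases c <;> simp [prTriple, nu] <;> norm_num

lemma sum_prTriple_x (b c : Bool) : ∑ a : Bool, prTriple (1/6) (1/6) (1/6) a b c = nu b c := by
  cases b <;> cases c <;> simp [prTriple, nu] <;> norm_num

lemma sum_nu (a : Bool) : ∑ b : Bool, nu a b = 1/2 := by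
  cases a <;> simp [nu] <;> norm_num

lemma margZ {n : ℕ} (x y : Fin n → Bool) :
    ∑ z : Fin n → Bool, prProfile (1/6) (1/6) (1/6) x y z = ∏ i, nu (x i) (y i) := by
  unfold prProfile
  rw [sum_fun_prod (fun i c => prTriple (1/6) (1/6) (1/6) (x i) (y i) c)]
  exact Finset.prod_congr rfl fun i _ => sum_prTriple_z _ _

lemma margY {n : ℕ} (x z : Fin n → Bool) :
    ∑ y : Fin n → Bool, prProfile (1/6) (1/6) (1/6) x y z = ∏ i, nu (x i) (z i) := by
  unfold prProfile
  rw [sum_fun_prod (fun i b => prTriple (1/6) (1/6) (1/6) (x i) b (z i))]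
  exact Finset.prod_congr rfl fun i _ => sum_prTriple_y _ _

lemma margX {n : ℕ} (y z : Fin n → Bool) :
    ∑ x : Fin n → Bool, prProfile (1/6) (1/6) (1/6) x y z = ∏ i, nu (y i) (z i) := by
  unfold prProfile
  rw [sum_fun_prod (fun i a => prTriple (1/6) (1/6) (1/6) a (y i) (z i))]
  exact Finset.prod_congr rfl fun i _ => sum_prTriple_x _ _

lemma sum_prod_nu {n : ℕ} (x : Fin n → Bool) :
    ∑ y : Fin n → Bool, ∏ i, nu (x i) (y i) = (1/2) ^ n := by
  rw [sum_fun_prod (fun i b => nu (x i) b),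
    Finset.prod_congr rfl fun i _ => sum_nu (x i), Finset.prod_const, Finset.card_univ,
    Fintype.card_fin]

lemma sum_prod_nu' {n : ℕ} (y : Fin n → Bool) :
    ∑ x : Fin n → Bool, ∏ i, nu (x i) (y i) = (1/2) ^ n := by
  have : ∀ x : Fin n → Bool, (∏ i, nu (x i) (y i)) = ∏ i, nu (y i) (x i) :=
    fun x => Finset.prod_congr rfl fun i _ => nu_comm _ _
  simp only [this]
  exact sum_prod_nu y

lemma sum_pi_succ {n : ℕ} (F : (Fin (n+1) → Bool) → ℝ) :
    ∑ x : Fin (n+1) → Bool, F x = ∑ a : Bool, ∑ x : Fin n → Bool, F (Fin.cons a x) := by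
  rw [← (Fin.consEquiv (fun _ => Bool)).sum_comp F, Fintype.sum_prod_type]
  rfl

/-- The two-function correlation sum under the pairwise marginal measure. -/
def K {n : ℕ} (f g : (Fin n → Bool) → ℝ) : ℝ :=
  ∑ x : Fin n → Bool, ∑ y : Fin n → Bool, (∏ i, nu (x i) (y i)) * (f x * g y)

lemma cons_le_cons {n : ℕ} (a : Bool) (x y : Fin n → Bool) (hxy : ∀ i, x i ≤ y i) :
    ∀ i, (Fin.cons a x : Fin (n+1) → Bool) i ≤ (Fin.cons a y : Fin (n+1) → Bool) i := by
  intro i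
  refine Fin.cases ?_ ?_ i <;> simp [hxy]

lemma cons_mono {n : ℕ} (x : Fin n → Bool) :
    ∀ i, (Fin.cons false x : Fin (n+1) → Bool) i ≤ (Fin.cons true x : Fin (n+1) → Bool) i := by
  intro i
  refine Fin.cases ?_ ?_ i <;> simp

/-- Negative-correlation (FKG-type) inequality: for monotone `f, g`,
the correlation sum is at most the product of the means. -/
lemma K_le {n : ℕ} (f g : (Fin n → Bool) → ℝ) (hf : MonotoneCube f) (hg : MonotoneCube g) :
    K f g ≤ (∑ x, f x) * (∑ y, g y) / 4 ^ n := by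
  induction n with
  | zero => simp [K]
  | succ n ih =>
    have hK : K f g = ∑ a : Bool, ∑ b : Bool,
        nu a b * K (fun x => f (Fin.cons a x)) (fun y => g (Fin.cons b y)) := by
      unfold K
      rw [sum_pi_succ (fun x => ∑ y : Fin (n+1) → Bool, (∏ i, nu (x i) (y i)) * (f x * g y))]
      refine Finset.sum_congr rfl fun a _ => ?_
      have h1 : ∀ x : Fin n → Bool,
          (∑ y : Fin (n+1) → Bool, (∏ i, nu ((Fin.cons a x : Fin (n+1) → Bool) i) (y i)) * (f (Fin.cons a x) * g y))
          = ∑ b : Bool, ∑ y : Fin n → Bool,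
              (nu a b * ∏ i, nu (x i) (y i)) * (f (Fin.cons a x) * g (Fin.cons b y)) := by
        intro x
        rw [sum_pi_succ (fun y => (∏ i, nu ((Fin.cons a x : Fin (n+1) → Bool) i) (y i)) * (f (Fin.cons a x) * g y))]
        refine Finset.sum_congr rfl fun b _ => Finset.sum_congr rfl fun y _ => ?_
        rw [Fin.prod_univ_succ]
        simp
      simp only [h1]
      rw [Finset.sum_comm]
      refine Finset.sum_congr rfl fun b _ => ?_
      rw [Finset.mul_sum]
      refine Finset.sum_congr rfl fun x _ => ?_
      rw [Finset.mul_sum]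
      refine Finset.sum_congr rfl fun y _ => ?_
      ring
    have hf0m : MonotoneCube (fun x : Fin n → Bool => f (Fin.cons false x)) :=
      fun x y hxy => hf _ _ (cons_le_cons false x y hxy)
    have hf1m : MonotoneCube (fun x : Fin n → Bool => f (Fin.cons true x)) :=
      fun x y hxy => hf _ _ (cons_le_cons true x y hxy)
    have hg0m : MonotoneCube (fun y : Fin n → Bool => g (Fin.cons false y)) :=
      fun x y hxy => hg _ _ (cons_le_cons false x y hxy)
    have hg1m : MonotoneCube (fun y : Fin n → Bool => g (Fin.cons true y)) :=
      fun x y hxy => hg _ _ (cons_le_cons true x y hxy)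
    have hP : (0:ℝ) < 4 ^ n := by positivity
    have hA : ∑ x : Fin n → Bool, f (Fin.cons false x) ≤ ∑ x : Fin n → Bool, f (Fin.cons true x) :=
      Finset.sum_le_sum fun x _ => hf _ _ (cons_mono x)
    have hB : ∑ y : Fin n → Bool, g (Fin.cons false y) ≤ ∑ y : Fin n → Bool, g (Fin.cons true y) :=
      Finset.sum_le_sum fun y _ => hg _ _ (cons_mono y)
    have i00 := ih _ _ hf0m hg0m
    have i01 := ih _ _ hf0m hg1m
    have i10 := ih _ _ hf1m hg0m
    have i11 := ih _ _ hf1m hg1m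
    rw [le_div_iff₀ hP] at i00 i01 i10 i11
    have hSf : ∑ x : Fin (n+1) → Bool, f x
        = (∑ x : Fin n → Bool, f (Fin.cons false x)) + ∑ x : Fin n → Bool, f (Fin.cons true x) := by
      rw [sum_pi_succ f]; simp [Fintype.sum_bool]; ring
    have hSg : ∑ y : Fin (n+1) → Bool, g y
        = (∑ y : Fin n → Bool, g (Fin.cons false y)) + ∑ y : Fin n → Bool, g (Fin.cons true y) := by
      rw [sum_pi_succ g]; simp [Fintype.sum_bool]; ring
    rw [hK, hSf, hSg]
    simp only [Fintype.sum_bool]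
    have n1 : nu true true = 1/6 := by norm_num [nu]
    have n2 : nu false false = 1/6 := by norm_num [nu]
    have n3 : nu true false = 1/3 := by norm_num [nu]
    have n4 : nu false true = 1/3 := by norm_num [nu]
    rw [n1, n2, n3, n4, pow_succ, le_div_iff₀ (by positivity)]
    nlinarith [mul_nonneg (sub_nonneg.2 hA) (sub_nonneg.2 hB), hP, i00, i01, i10, i11]


/-- Kalai's conjecture: if the choice functions are monotone
and balanced and the preferences are uniform, the probability of a rational
choice is at least 3/4, i.e. `W(f,g,h) ≤ 1/4`. -/
theorem monotone_balanced_rationality {n : ℕ} (hn : 1 ≤ n)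
    (f g h : (Fin n → Bool) → ℝ)
    (hf : IsBooleanFn f) (hg : IsBooleanFn g) (hh : IsBooleanFn h)
    (hfm : MonotoneCube f) (hgm : MonotoneCube g) (hhm : MonotoneCube h)
    (hfb : expect f = 1 / 2) (hgb : expect g = 1 / 2)
    (hhb : expect h = 1 / 2) :
    W (1 / 6) (1 / 6) (1 / 6) f g h ≤ 1 / 4 := by
  have h2 : (0:ℝ) < 2 ^ n := by positivity
  have hSumf : ∑ x : Fin n → Bool, f x = 2 ^ n / 2 := by
    unfold expect at hfb
    field_simp at hfb
    linarith
  have hSumg : ∑ x : Fin n → Bool, g x = 2 ^ n / 2 := by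
    unfold expect at hgb
    field_simp at hgb
    linarith
  have hSumh : ∑ x : Fin n → Bool, h x = 2 ^ n / 2 := by
    unfold expect at hhb
    field_simp at hhb
    linarith
  have hhalf : ((1:ℝ)/2) ^ n * 2 ^ n = 1 := by
    rw [← mul_pow]; norm_num
  have key : W (1/6) (1/6) (1/6) f g h
      = 1 - 1/2 - 1/2 - 1/2 + K f g + K f h + K g h := by
    unfold W
    have expand : ∀ x y z : Fin n → Bool,
        prProfile (1/6) (1/6) (1/6) x y z * (f x * g y * h z + (1 - f x) * (1 - g y) * (1 - h z))
        = prProfile (1/6) (1/6) (1/6) x y z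
          - prProfile (1/6) (1/6) (1/6) x y z * f x
          - prProfile (1/6) (1/6) (1/6) x y z * g y
          - prProfile (1/6) (1/6) (1/6) x y z * h z
          + prProfile (1/6) (1/6) (1/6) x y z * (f x * g y)
          + prProfile (1/6) (1/6) (1/6) x y z * (f x * h z)
          + prProfile (1/6) (1/6) (1/6) x y z * (g y * h z) := fun x y z => by ring
    simp only [expand, Finset.sum_add_distrib, Finset.sum_sub_distrib]
    have hT1 : (∑ x : Fin n → Bool, ∑ y : Fin n → Bool, ∑ z : Fin n → Bool,
        prProfile (1/6) (1/6) (1/6) x y z) = 1 := by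
      simp only [margZ, sum_prod_nu, Finset.sum_const, Finset.card_univ, nsmul_eq_mul]
      simp only [Fintype.card_fun, Fintype.card_bool, Fintype.card_fin, Nat.cast_pow,
        Nat.cast_ofNat]
      calc ((2:ℝ)^n) * (1/2)^n = (1/2)^n * 2^n := by ring
        _ = 1 := hhalf
    have hT2 : (∑ x : Fin n → Bool, ∑ y : Fin n → Bool, ∑ z : Fin n → Bool,
        prProfile (1/6) (1/6) (1/6) x y z * f x) = 1/2 := by
      have e1 : ∀ x y : Fin n → Bool,
          (∑ z : Fin n → Bool, prProfile (1/6) (1/6) (1/6) x y z * f x)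
          = (∏ i, nu (x i) (y i)) * f x := by
        intro x y; rw [← Finset.sum_mul, margZ]
      have e2 : ∀ x : Fin n → Bool,
          (∑ y : Fin n → Bool, (∏ i, nu (x i) (y i)) * f x) = (1/2)^n * f x := by
        intro x; rw [← Finset.sum_mul, sum_prod_nu]
      simp only [e1, e2, ← Finset.mul_sum, hSumf]
      calc ((1:ℝ)/2)^n * (2^n/2) = ((1/2)^n * 2^n)/2 := by ring
        _ = 1/2 := by rw [hhalf]
    have hT3 : (∑ x : Fin n → Bool, ∑ y : Fin n → Bool, ∑ z : Fin n → Bool,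
        prProfile (1/6) (1/6) (1/6) x y z * g y) = 1/2 := by
      have e1 : ∀ x y : Fin n → Bool,
          (∑ z : Fin n → Bool, prProfile (1/6) (1/6) (1/6) x y z * g y)
          = (∏ i, nu (x i) (y i)) * g y := by
        intro x y; rw [← Finset.sum_mul, margZ]
      simp only [e1]
      rw [Finset.sum_comm]
      have e2 : ∀ y : Fin n → Bool,
          (∑ x : Fin n → Bool, (∏ i, nu (x i) (y i)) * g y) = (1/2)^n * g y := by
        intro y; rw [← Finset.sum_mul, sum_prod_nu']
      simp only [e2, ← Finset.mul_sum, hSumg]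
      calc ((1:ℝ)/2)^n * (2^n/2) = ((1/2)^n * 2^n)/2 := by ring
        _ = 1/2 := by rw [hhalf]
    have hT4 : (∑ x : Fin n → Bool, ∑ y : Fin n → Bool, ∑ z : Fin n → Bool,
        prProfile (1/6) (1/6) (1/6) x y z * h z) = 1/2 := by
      have e1 : ∀ x : Fin n → Bool,
          (∑ y : Fin n → Bool, ∑ z : Fin n → Bool, prProfile (1/6) (1/6) (1/6) x y z * h z)
          = ∑ z : Fin n → Bool, (∏ i, nu (x i) (z i)) * h z := by
        intro x
        rw [Finset.sum_comm]
        exact Finset.sum_congr rfl fun z _ => by rw [← Finset.sum_mul, margY]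
      simp only [e1]
      rw [Finset.sum_comm]
      have e2 : ∀ z : Fin n → Bool,
          (∑ x : Fin n → Bool, (∏ i, nu (x i) (z i)) * h z) = (1/2)^n * h z := by
        intro z; rw [← Finset.sum_mul, sum_prod_nu']
      simp only [e2, ← Finset.mul_sum, hSumh]
      calc ((1:ℝ)/2)^n * (2^n/2) = ((1/2)^n * 2^n)/2 := by ring
        _ = 1/2 := by rw [hhalf]
    have hT5 : (∑ x : Fin n → Bool, ∑ y : Fin n → Bool, ∑ z : Fin n → Bool,
        prProfile (1/6) (1/6) (1/6) x y z * (f x * g y)) = K f g := by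
      have e1 : ∀ x y : Fin n → Bool,
          (∑ z : Fin n → Bool, prProfile (1/6) (1/6) (1/6) x y z * (f x * g y))
          = (∏ i, nu (x i) (y i)) * (f x * g y) := by
        intro x y; rw [← Finset.sum_mul, margZ]
      simp only [e1]
      rfl
    have hT6 : (∑ x : Fin n → Bool, ∑ y : Fin n → Bool, ∑ z : Fin n → Bool,
        prProfile (1/6) (1/6) (1/6) x y z * (f x * h z)) = K f h := by
      have e1 : ∀ x : Fin n → Bool,
          (∑ y : Fin n → Bool, ∑ z : Fin n → Bool, prProfile (1/6) (1/6) (1/6) x y z * (f x * h z))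
          = ∑ z : Fin n → Bool, (∏ i, nu (x i) (z i)) * (f x * h z) := by
        intro x
        rw [Finset.sum_comm]
        exact Finset.sum_congr rfl fun z _ => by rw [← Finset.sum_mul, margY]
      simp only [e1]
      rfl
    have hT7 : (∑ x : Fin n → Bool, ∑ y : Fin n → Bool, ∑ z : Fin n → Bool,
        prProfile (1/6) (1/6) (1/6) x y z * (g y * h z)) = K g h := by
      rw [Finset.sum_comm]
      have e1 : ∀ y : Fin n → Bool,
          (∑ x : Fin n → Bool, ∑ z : Fin n → Bool, prProfile (1/6) (1/6) (1/6) x y z * (g y * h z))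
          = ∑ z : Fin n → Bool, (∏ i, nu (y i) (z i)) * (g y * h z) := by
        intro y
        rw [Finset.sum_comm]
        exact Finset.sum_congr rfl fun z _ => by rw [← Finset.sum_mul, margX]
      simp only [e1]
      rfl
    rw [hT1, hT2, hT3, hT4, hT5, hT6, hT7]
  have h4 : (4:ℝ)^n = 2^n * 2^n := by rw [← mul_pow]; norm_num
  have hquarter : ((2:ℝ)^n/2) * (2^n/2) / 4^n = 1/4 := by
    rw [h4]; field_simp; ring
  have hKfg : K f g ≤ 1/4 := by
    have := K_le f g hfm hgm
    rw [hSumf, hSumg] at this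
    rw [hquarter] at this
    exact this
  have hKfh : K f h ≤ 1/4 := by
    have := K_le f h hfm hhm
    rw [hSumf, hSumh] at this
    rw [hquarter] at this
    exact this
  have hKgh : K g h ≤ 1/4 := by
    have := K_le g h hgm hhm
    rw [hSumg, hSumh] at this
    rw [hquarter] at this
    exact this
  rw [key]
  linarith

end GSWF
end
end

section
/- Let f, g : {0,1}^n → {0,1} be monotone increasing Boolean functions. Then for every δ with 0 ≤ δ ≤ 1 one has ⟨⟨f,g⟩⟩_δ ≥ 0, and for every δ with −1 ≤ δ ≤ 0 one has ⟨⟨f,g⟩⟩_δ ≤ 0 (equivalently, (1/δ)⟨⟨f,g⟩⟩_δ ≥ 0 for all nonzero δ ∈ [−1,1]). -/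
open Finset Real

noncomputable section

namespace GSWF

/-! ### Auxiliary development -/

/-- weight of a coordinate pair in the δ-correlated measure (unnormalized) -/
def wt (δ : ℝ) (a b : Bool) : ℝ := if a = b then 1 + δ else 1 - δ

/-- unnormalized correlated sum -/
def csum {n : ℕ} (δ : ℝ) (f g : (Fin n → Bool) → ℝ) : ℝ :=
  ∑ x : Fin n → Bool, ∑ y : Fin n → Bool, f x * g y * ∏ i, wt δ (x i) (y i)

lemma wt_nonneg {δ : ℝ} (h1 : -1 ≤ δ) (h2 : δ ≤ 1) (a b : Bool) : 0 ≤ wt δ a b := by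
  unfold wt; split <;> linarith

lemma sum_walsh {n : ℕ} (δ : ℝ) (x y : Fin n → Bool) :
    ∑ S : Finset (Fin n), δ ^ S.card * walsh S x * walsh S y
      = ∏ i, wt δ (x i) (y i) := by
  have key : ∀ S : Finset (Fin n), δ ^ S.card * walsh S x * walsh S y
      = ∏ i ∈ S, (δ * ((if x i then (1:ℝ) else -1) * (if y i then (1:ℝ) else -1))) := by
    intro S
    rw [walsh, walsh]
    rw [Finset.prod_mul_distrib, Finset.prod_mul_distrib, Finset.prod_const]
    ring
  simp only [key]
  have expand := Finset.prod_add
    (fun i => (δ * ((if x i then (1:ℝ) else -1) * (if y i then (1:ℝ) else -1))))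
    (fun _ => (1:ℝ)) (Finset.univ : Finset (Fin n))
  rw [Finset.powerset_univ] at expand
  simp only [Finset.prod_const_one, mul_one] at expand
  rw [← expand]
  refine Finset.prod_congr rfl fun i _ => ?_
  unfold wt
  by_cases hx : x i <;> by_cases hy : y i <;> simp [hx, hy] <;> ring_nf

lemma fourier {n : ℕ} (δ : ℝ) (f g : (Fin n → Bool) → ℝ) :
    ∑ S : Finset (Fin n), coeff f S * coeff g S * δ ^ S.card
      = csum δ f g / ((2:ℝ) ^ n * 2 ^ n) := by
  have step : ∀ S : Finset (Fin n), coeff f S * coeff g S * δ ^ S.card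
      = (∑ x : Fin n → Bool, ∑ y : Fin n → Bool,
          f x * g y * (δ ^ S.card * walsh S x * walsh S y)) / ((2:ℝ) ^ n * 2 ^ n) := by
    intro S
    rw [coeff, coeff, div_mul_div_comm, div_mul_eq_mul_div]
    congr 1
    rw [Finset.sum_mul_sum, Finset.sum_mul]
    refine Finset.sum_congr rfl fun x _ => ?_
    rw [Finset.sum_mul]
    exact Finset.sum_congr rfl fun y _ => by ring
  rw [Finset.sum_congr rfl fun S _ => step S, ← Finset.sum_div]
  congr 1
  rw [Finset.sum_comm]
  refine Finset.sum_congr rfl fun x _ => ?_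
  rw [Finset.sum_comm]
  refine Finset.sum_congr rfl fun y _ => ?_
  rw [← Finset.mul_sum, sum_walsh]

lemma csum_succ {n : ℕ} (δ : ℝ) (f g : (Fin (n+1) → Bool) → ℝ) :
    csum δ f g = ∑ a : Bool, ∑ b : Bool, wt δ a b *
      csum δ (fun x => f (Fin.cons a x)) (fun y => g (Fin.cons b y)) := by
  unfold csum
  simp only [sum_pi_succ, Fin.prod_univ_succ, Fin.cons_zero, Fin.cons_succ]
  refine Finset.sum_congr rfl fun a _ => ?_
  rw [Finset.sum_comm]
  refine Finset.sum_congr rfl fun b _ => ?_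
  rw [Finset.mul_sum]
  refine Finset.sum_congr rfl fun x _ => ?_
  rw [Finset.mul_sum]
  exact Finset.sum_congr rfl fun y _ => by ring


lemma restrict_mono {n : ℕ} (f : (Fin (n+1) → Bool) → ℝ) (hf : MonotoneCube f) (a : Bool) :
    MonotoneCube (fun x => f (Fin.cons a x)) := by
  intro x y h
  apply hf
  intro i
  refine Fin.cases ?_ ?_ i
  · simp
  · intro j; simpa using h j

lemma restrict_sum_le {n : ℕ} (f : (Fin (n+1) → Bool) → ℝ) (hf : MonotoneCube f) :
    ∑ x : Fin n → Bool, f (Fin.cons false x) ≤ ∑ x : Fin n → Bool, f (Fin.cons true x) := by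
  refine Finset.sum_le_sum fun x _ => hf _ _ fun i => ?_
  refine Fin.cases ?_ ?_ i
  · simp
  · intro j; simp

lemma harris_pos : ∀ (n : ℕ) (δ : ℝ), 0 ≤ δ → δ ≤ 1 →
    ∀ f g : (Fin n → Bool) → ℝ, MonotoneCube f → MonotoneCube g →
    (∑ x : Fin n → Bool, f x) * (∑ x : Fin n → Bool, g x) ≤ csum δ f g := by
  intro n
  induction n with
  | zero =>
    intro δ h0 h1 f g hf hg
    apply le_of_eq
    rw [Finset.sum_mul_sum]
    simp [csum]
  | succ n IH =>
    intro δ h0 h1 f g hf hg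
    rw [csum_succ, sum_pi_succ f, sum_pi_succ g]
    have key : (∑ a : Bool, ∑ x : Fin n → Bool, f (Fin.cons a x)) *
        (∑ b : Bool, ∑ y : Fin n → Bool, g (Fin.cons b y))
        ≤ ∑ a : Bool, ∑ b : Bool, wt δ a b *
            ((∑ x : Fin n → Bool, f (Fin.cons a x)) * (∑ y : Fin n → Bool, g (Fin.cons b y))) := by
      have hA := restrict_sum_le f hf
      have hB := restrict_sum_le g hg
      simp only [Fintype.sum_bool, wt, if_pos rfl]
      norm_num
      nlinarith [hA, hB, h0, mul_nonneg (sub_nonneg.2 hA) (sub_nonneg.2 hB)]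
    refine key.trans (Finset.sum_le_sum fun a _ => Finset.sum_le_sum fun b _ => ?_)
    exact mul_le_mul_of_nonneg_left
      (IH δ h0 h1 _ _ (restrict_mono f hf a) (restrict_mono g hg b))
      (wt_nonneg (by linarith) h1 a b)

lemma harris_neg : ∀ (n : ℕ) (δ : ℝ), -1 ≤ δ → δ ≤ 0 →
    ∀ f g : (Fin n → Bool) → ℝ, MonotoneCube f → MonotoneCube g →
    csum δ f g ≤ (∑ x : Fin n → Bool, f x) * (∑ x : Fin n → Bool, g x) := by
  intro n
  induction n with
  | zero =>
    intro δ h0 h1 f g hf hg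
    apply le_of_eq
    rw [Finset.sum_mul_sum]
    simp [csum]
  | succ n IH =>
    intro δ h0 h1 f g hf hg
    rw [csum_succ, sum_pi_succ f, sum_pi_succ g]
    have key : (∑ a : Bool, ∑ b : Bool, wt δ a b *
            ((∑ x : Fin n → Bool, f (Fin.cons a x)) * (∑ y : Fin n → Bool, g (Fin.cons b y))))
        ≤ (∑ a : Bool, ∑ x : Fin n → Bool, f (Fin.cons a x)) *
          (∑ b : Bool, ∑ y : Fin n → Bool, g (Fin.cons b y)) := by
      have hA := restrict_sum_le f hf
      have hB := restrict_sum_le g hg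
      simp only [Fintype.sum_bool, wt, if_pos rfl]
      norm_num
      nlinarith [hA, hB, h1, mul_nonneg (sub_nonneg.2 hA) (sub_nonneg.2 hB)]
    refine le_trans (Finset.sum_le_sum fun a _ => Finset.sum_le_sum fun b _ => ?_) key
    exact mul_le_mul_of_nonneg_left
      (IH δ h0 h1 _ _ (restrict_mono f hf a) (restrict_mono g hg b))
      (wt_nonneg h0 (by linarith) a b)

lemma bip_eq {n : ℕ} (δ : ℝ) (f g : (Fin n → Bool) → ℝ) :
    bip δ f g = csum δ f g / ((2:ℝ) ^ n * 2 ^ n) - expect f * expect g := by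
  have split := Finset.sum_filter_add_sum_filter_not (Finset.univ)
    (fun S : Finset (Fin n) => S ≠ ∅) (fun S => coeff f S * coeff g S * δ ^ S.card)
  have hset : Finset.univ.filter (fun S : Finset (Fin n) => ¬ S ≠ ∅) = {∅} := by
    ext S; simp
  rw [hset, Finset.sum_singleton, Finset.card_empty, pow_zero, mul_one,
    coeff_empty, coeff_empty, fourier] at split
  rw [bip]
  linarith [split]


lemma expect_mul_expect {n : ℕ} (f g : (Fin n → Bool) → ℝ) :
    expect f * expect g
      = ((∑ x : Fin n → Bool, f x) * (∑ x : Fin n → Bool, g x)) / ((2:ℝ) ^ n * 2 ^ n) := by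
  rw [expect, expect, div_mul_div_comm]


/-- for monotone increasing Boolean functions `f, g`,
`⟨⟨f,g⟩⟩_δ ≥ 0` for `0 ≤ δ ≤ 1` and `⟨⟨f,g⟩⟩_δ ≤ 0` for `-1 ≤ δ ≤ 0`. -/
theorem monotone_biased_inner_product_sign {n : ℕ}
    (f g : (Fin n → Bool) → ℝ)
    (hf : IsBooleanFn f) (hg : IsBooleanFn g)
    (hfm : MonotoneCube f) (hgm : MonotoneCube g) :
    (∀ δ : ℝ, 0 ≤ δ → δ ≤ 1 → 0 ≤ bip δ f g) ∧
    (∀ δ : ℝ, -1 ≤ δ → δ ≤ 0 → bip δ f g ≤ 0) := by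
  have hpow : (0:ℝ) < (2:ℝ) ^ n * 2 ^ n := by positivity
  constructor
  · intro δ h0 h1
    rw [bip_eq, expect_mul_expect, div_sub_div_same]
    exact div_nonneg (sub_nonneg.2 (harris_pos n δ h0 h1 f g hfm hgm)) hpow.le
  · intro δ h0 h1
    rw [bip_eq, expect_mul_expect, div_sub_div_same]
    exact div_nonpos_of_nonpos_of_nonneg
      (sub_nonpos.2 (harris_neg n δ h0 h1 f g hfm hgm)) hpow.le

end GSWF
end
end

section
/- Let f, g : {0,1}^n → {0,1} be Boolean functions with E[f] = p₁ and E[g] = p₂, and let −1 ≤ δ ≤ 1. Then ⟨⟨f,g⟩⟩_δ ≥ −(1−p₁)(1−p₂). Moreover, if −1 < δ < 1, then equality holds if and only if f ≡ 1 or g ≡ 1. -/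
open Finset Real

noncomputable section

namespace GSWF

def corr {n : ℕ} (δ : ℝ) (x y : Fin n → Bool) : ℝ :=
  ∏ i, (if x i = y i then (1 + δ) / 4 else (1 - δ) / 4)

lemma sum_walsh_mul_walsh {n : ℕ} (δ : ℝ) (x y : Fin n → Bool) :
    ∑ S : Finset (Fin n), walsh S x * walsh S y * δ ^ S.card
      = ∏ i, (if x i = y i then 1 + δ else 1 - δ) := by
  have h1 : ∀ S : Finset (Fin n), walsh S x * walsh S y * δ ^ S.card
      = (∏ i ∈ S, (δ * ((if x i then (1:ℝ) else -1) * (if y i then (1:ℝ) else -1))))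
        * ∏ i ∈ (univ \ S), (1:ℝ) := by
    intro S
    rw [Finset.prod_mul_distrib, Finset.prod_mul_distrib, Finset.prod_const,
      Finset.prod_const_one, walsh, walsh]
    ring
  rw [Finset.sum_congr rfl (fun S _ => h1 S), ← Finset.powerset_univ, ← Finset.prod_add]
  refine Finset.prod_congr rfl fun i _ => ?_
  cases hx : x i <;> cases hy : y i <;> simp <;> ring

lemma corr_eq {n : ℕ} (δ : ℝ) (x y : Fin n → Bool) :
    corr δ x y = (∏ i, (if x i = y i then 1 + δ else 1 - δ)) / ((2:ℝ) ^ n * 2 ^ n) := by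
  rw [corr]
  have : ∀ i : Fin n, (if x i = y i then (1+δ)/4 else (1-δ)/4)
      = (if x i = y i then 1 + δ else 1 - δ) / 4 := by
    intro i; split <;> rfl
  simp_rw [this]
  rw [Finset.prod_div_distrib, Finset.prod_const]
  congr 1
  rw [Finset.card_univ, Fintype.card_fin, ← mul_pow]
  norm_num

lemma sum_coeff_eq {n : ℕ} (δ : ℝ) (f g : (Fin n → Bool) → ℝ) :
    ∑ S : Finset (Fin n), coeff f S * coeff g S * δ ^ S.card
      = ∑ x : Fin n → Bool, ∑ y : Fin n → Bool, corr δ x y * f x * g y := by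
  have h1 : ∀ S : Finset (Fin n), coeff f S * coeff g S * δ ^ S.card
      = (∑ x : Fin n → Bool, ∑ y : Fin n → Bool,
          f x * g y * (walsh S x * walsh S y * δ ^ S.card)) / ((2:ℝ)^n * 2^n) := by
    intro S
    rw [coeff, coeff, div_mul_div_comm, div_mul_eq_mul_div, Finset.sum_mul_sum,
      Finset.sum_mul]
    congr 1
    refine Finset.sum_congr rfl fun a _ => ?_
    rw [Finset.sum_mul]
    exact Finset.sum_congr rfl fun b _ => by ring
  rw [Finset.sum_congr rfl (fun S _ => h1 S), ← Finset.sum_div]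
  rw [Finset.sum_comm (f := fun (S : Finset (Fin n)) (x : Fin n → Bool) =>
    ∑ y : Fin n → Bool, f x * g y * (walsh S x * walsh S y * δ ^ S.card))]
  rw [Finset.sum_div]
  refine Finset.sum_congr rfl fun a _ => ?_
  rw [Finset.sum_comm (f := fun (S : Finset (Fin n)) (y : Fin n → Bool) =>
    f a * g y * (walsh S a * walsh S y * δ ^ S.card)), Finset.sum_div]
  refine Finset.sum_congr rfl fun b _ => ?_
  rw [← Finset.mul_sum, sum_walsh_mul_walsh, corr_eq]
  ring

lemma sum_walsh_eq_zero {n : ℕ} (S : Finset (Fin n)) (hS : S ≠ ∅) :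
    ∑ x : Fin n → Bool, walsh S x = 0 := by
  obtain ⟨j, hj⟩ := Finset.nonempty_iff_ne_empty.2 hS
  have hw : ∀ x : Fin n → Bool,
      walsh S x = ∏ i, (if i ∈ S then (if x i then (1:ℝ) else -1) else 1) := by
    intro x
    rw [Finset.prod_ite_mem, Finset.univ_inter, walsh]
  simp_rw [hw]
  rw [← Fintype.prod_sum (fun (i : Fin n) (b : Bool) =>
    if i ∈ S then (if b then (1:ℝ) else -1) else 1)]
  refine Finset.prod_eq_zero (Finset.mem_univ j) ?_
  simp [hj]

lemma coeff_one_sub {n : ℕ} (f : (Fin n → Bool) → ℝ) (S : Finset (Fin n)) :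
    coeff (fun x => 1 - f x) S = (if S = ∅ then 1 else 0) - coeff f S := by
  rw [coeff, coeff]
  simp_rw [sub_mul, one_mul, Finset.sum_sub_distrib, sub_div]
  congr 1
  split
  · subst ‹S = ∅›
    simp [walsh, Finset.card_univ]
  · rw [sum_walsh_eq_zero S ‹S ≠ ∅›, zero_div]



lemma T_eq {n : ℕ} (δ : ℝ) (f g : (Fin n → Bool) → ℝ) :
    ∑ x : Fin n → Bool, ∑ y : Fin n → Bool, corr δ x y * (1 - f x) * (1 - g y)
      = (1 - expect f) * (1 - expect g) + bip δ f g := by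
  rw [← sum_coeff_eq δ (fun x => 1 - f x) (fun y => 1 - g y)]
  rw [← Finset.sum_filter_add_sum_filter_not univ (fun S : Finset (Fin n) => S = ∅)]
  congr 1
  · rw [Finset.filter_eq']
    simp [coeff_one_sub, coeff_empty]
  · rw [bip]
    refine Finset.sum_congr rfl fun S hS => ?_
    have h : S ≠ ∅ := by simpa using (Finset.mem_filter.1 hS).2
    rw [coeff_one_sub, coeff_one_sub, if_neg h]
    ring

lemma corr_nonneg {n : ℕ} {δ : ℝ} (h1 : -1 ≤ δ) (h2 : δ ≤ 1) (x y : Fin n → Bool) :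
    0 ≤ corr δ x y :=
  Finset.prod_nonneg fun i _ => by split <;> linarith

lemma corr_pos {n : ℕ} {δ : ℝ} (h1 : -1 < δ) (h2 : δ < 1) (x y : Fin n → Bool) :
    0 < corr δ x y :=
  Finset.prod_pos fun i _ => by split <;> linarith


/-- for Boolean `f, g` with expectations `p₁, p₂` and
`-1 ≤ δ ≤ 1`, `⟨⟨f,g⟩⟩_δ ≥ -(1-p₁)(1-p₂)`; for `-1 < δ < 1`, equality
holds iff `f ≡ 1` or `g ≡ 1`. -/
theorem boolean_biased_product_lower_bound {n : ℕ} (hn : 1 ≤ n)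
    (f g : (Fin n → Bool) → ℝ)
    (hf : IsBooleanFn f) (hg : IsBooleanFn g)
    (p₁ p₂ : ℝ) (hp₁ : expect f = p₁) (hp₂ : expect g = p₂)
    (δ : ℝ) (hδ₁ : -1 ≤ δ) (hδ₂ : δ ≤ 1) :
    -((1 - p₁) * (1 - p₂)) ≤ bip δ f g ∧
    (-1 < δ → δ < 1 →
      (bip δ f g = -((1 - p₁) * (1 - p₂)) ↔
        (∀ x, f x = 1) ∨ (∀ x, g x = 1))) := by
  subst hp₁ hp₂
  have hTe := T_eq δ f g
  have hterm : ∀ x y : Fin n → Bool, 0 ≤ corr δ x y * (1 - f x) * (1 - g y) := by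
    intro x y
    have hc := corr_nonneg hδ₁ hδ₂ x y
    have h1 : 0 ≤ 1 - f x := by rcases hf x with h | h <;> rw [h] <;> norm_num
    have h2 : 0 ≤ 1 - g y := by rcases hg y with h | h <;> rw [h] <;> norm_num
    exact mul_nonneg (mul_nonneg hc h1) h2
  have hT0 : 0 ≤ ∑ x : Fin n → Bool, ∑ y : Fin n → Bool,
      corr δ x y * (1 - f x) * (1 - g y) :=
    Finset.sum_nonneg fun x _ => Finset.sum_nonneg fun y _ => hterm x y
  constructor
  · linarith
  · intro hδ₁' hδ₂'
    constructor
    · intro heq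
      have hT00 : ∑ x : Fin n → Bool, ∑ y : Fin n → Bool,
          corr δ x y * (1 - f x) * (1 - g y) = 0 := by
        rw [hTe]; linarith
      have hxy : ∀ x y : Fin n → Bool, corr δ x y * (1 - f x) * (1 - g y) = 0 := by
        intro x y
        have h1 := (Finset.sum_eq_zero_iff_of_nonneg
          (fun x _ => Finset.sum_nonneg fun y _ => hterm x y)).1 hT00 x (Finset.mem_univ x)
        exact (Finset.sum_eq_zero_iff_of_nonneg
          (fun y _ => hterm x y)).1 h1 y (Finset.mem_univ y)
      by_cases hfall : ∀ x, f x = 1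
      · exact Or.inl hfall
      · right
        push_neg at hfall
        obtain ⟨x₀, hx₀⟩ := hfall
        have hfx0 : f x₀ = 0 := (hf x₀).resolve_right hx₀
        intro y
        have h := hxy x₀ y
        have hc : 0 < corr δ x₀ y := corr_pos hδ₁' hδ₂' x₀ y
        rw [hfx0] at h
        have h' : (1 : ℝ) - g y = 0 := by
          rcases mul_eq_zero.1 h with h | h
          · rcases mul_eq_zero.1 h with h | h
            · exact absurd h (ne_of_gt hc)
            · norm_num at h
          · exact h
        linarith
    · intro hor
      have hT00 : ∑ x : Fin n → Bool, ∑ y : Fin n → Bool,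
          corr δ x y * (1 - f x) * (1 - g y) = 0 := by
        rcases hor with h | h
        · refine Finset.sum_eq_zero fun x _ => Finset.sum_eq_zero fun y _ => ?_
          rw [h x]; ring
        · refine Finset.sum_eq_zero fun x _ => Finset.sum_eq_zero fun y _ => ?_
          rw [h y]; ring
      linarith


end GSWF
end
end

section
/- Consider a GSWF on three alternatives with n voters satisfying the IIA condition, whose choice functions f, g, h : {0,1}^n → {0,1} are all non-constant, with the individual preferences independent and uniformly distributed (i.e., distributed according to D(1/6,1/6,1/6)). If p₁ + p₂ + p₃ ≤ 1, where p₁ = E[f], p₂ = E[g], p₃ = E[h], then the probability of irrational choice is strictly positive: W(f,g,h) > 0. -/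
open Finset Real

noncomputable section

namespace GSWF

/-! ### Auxiliary lemmas for the proof -/

lemma sum_pi_prod {n : ℕ} (F : Fin n → Bool → ℝ) :
    ∑ z : Fin n → Bool, ∏ i, F i (z i) = ∏ i, ∑ b : Bool, F i b := by
  symm
  rw [Finset.prod_univ_sum, Fintype.piFinset_univ]

lemma prTriple_nonneg (a b c : Bool) :
    0 ≤ prTriple (1 / 6) (1 / 6) (1 / 6) a b c := by
  cases a <;> cases b <;> cases c <;> norm_num [prTriple]

lemma prProfile_nonneg {n : ℕ} (x y z : Fin n → Bool) :
    0 ≤ prProfile (1 / 6) (1 / 6) (1 / 6) x y z :=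
  Finset.prod_nonneg fun i _ => prTriple_nonneg _ _ _

lemma sum_c_pos (a b : Bool) :
    0 < ∑ c : Bool, prTriple (1 / 6) (1 / 6) (1 / 6) a b c := by
  cases a <;> cases b <;> norm_num [Fintype.sum_bool, prTriple]

lemma sum_bc (a : Bool) :
    ∑ b : Bool, ∑ c : Bool, prTriple (1 / 6) (1 / 6) (1 / 6) a b c = 1 / 2 := by
  cases a <;> norm_num [Fintype.sum_bool, prTriple]

lemma sum_ac (b : Bool) :
    ∑ a : Bool, ∑ c : Bool, prTriple (1 / 6) (1 / 6) (1 / 6) a b c = 1 / 2 := by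
  cases b <;> norm_num [Fintype.sum_bool, prTriple]

lemma sum_ab (c : Bool) :
    ∑ a : Bool, ∑ b : Bool, prTriple (1 / 6) (1 / 6) (1 / 6) a b c = 1 / 2 := by
  cases c <;> norm_num [Fintype.sum_bool, prTriple]

/-- z-marginal of the profile probability, as a product over coordinates. -/
lemma sum_z_prProfile {n : ℕ} (x y : Fin n → Bool) :
    ∑ z : Fin n → Bool, prProfile (1 / 6) (1 / 6) (1 / 6) x y z
      = ∏ i, ∑ c : Bool, prTriple (1 / 6) (1 / 6) (1 / 6) (x i) (y i) c := by
  unfold prProfile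
  exact sum_pi_prod fun i c => prTriple (1 / 6) (1 / 6) (1 / 6) (x i) (y i) c

lemma sum_z_prProfile_pos {n : ℕ} (x y : Fin n → Bool) :
    0 < ∑ z : Fin n → Bool, prProfile (1 / 6) (1 / 6) (1 / 6) x y z := by
  rw [sum_z_prProfile]
  exact Finset.prod_pos fun i _ => sum_c_pos _ _

/-- y-marginal of the profile probability. -/
lemma sum_y_prProfile {n : ℕ} (x z : Fin n → Bool) :
    ∑ y : Fin n → Bool, prProfile (1 / 6) (1 / 6) (1 / 6) x y z
      = ∏ i, ∑ b : Bool, prTriple (1 / 6) (1 / 6) (1 / 6) (x i) b (z i) := by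
  unfold prProfile
  exact sum_pi_prod fun i b => prTriple (1 / 6) (1 / 6) (1 / 6) (x i) b (z i)

lemma sum_yz_prProfile {n : ℕ} (x : Fin n → Bool) :
    ∑ y : Fin n → Bool, ∑ z : Fin n → Bool,
      prProfile (1 / 6) (1 / 6) (1 / 6) x y z = (1 / 2 : ℝ) ^ n := by
  have : ∀ y : Fin n → Bool,
      ∑ z : Fin n → Bool, prProfile (1 / 6) (1 / 6) (1 / 6) x y z
        = ∏ i, ∑ c : Bool, prTriple (1 / 6) (1 / 6) (1 / 6) (x i) (y i) c :=
    fun y => sum_z_prProfile x y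
  simp only [this]
  rw [sum_pi_prod fun i b => ∑ c : Bool, prTriple (1 / 6) (1 / 6) (1 / 6) (x i) b c]
  have h2 : ∀ i : Fin n,
      (∑ b : Bool, ∑ c : Bool, prTriple (1 / 6) (1 / 6) (1 / 6) (x i) b c)
        = (1 / 2 : ℝ) := fun i => sum_bc (x i)
  simp only [h2]
  rw [Finset.prod_const, Finset.card_univ, Fintype.card_fin]

lemma sum_xz_prProfile {n : ℕ} (y : Fin n → Bool) :
    ∑ x : Fin n → Bool, ∑ z : Fin n → Bool,
      prProfile (1 / 6) (1 / 6) (1 / 6) x y z = (1 / 2 : ℝ) ^ n := by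
  have : ∀ x : Fin n → Bool,
      ∑ z : Fin n → Bool, prProfile (1 / 6) (1 / 6) (1 / 6) x y z
        = ∏ i, ∑ c : Bool, prTriple (1 / 6) (1 / 6) (1 / 6) (x i) (y i) c :=
    fun x => sum_z_prProfile x y
  simp only [this]
  rw [sum_pi_prod fun i a => ∑ c : Bool, prTriple (1 / 6) (1 / 6) (1 / 6) a (y i) c]
  have h2 : ∀ i : Fin n,
      (∑ a : Bool, ∑ c : Bool, prTriple (1 / 6) (1 / 6) (1 / 6) a (y i) c)
        = (1 / 2 : ℝ) := fun i => sum_ac (y i)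
  simp only [h2]
  rw [Finset.prod_const, Finset.card_univ, Fintype.card_fin]

lemma sum_xy_prProfile {n : ℕ} (z : Fin n → Bool) :
    ∑ x : Fin n → Bool, ∑ y : Fin n → Bool,
      prProfile (1 / 6) (1 / 6) (1 / 6) x y z = (1 / 2 : ℝ) ^ n := by
  have : ∀ x : Fin n → Bool,
      ∑ y : Fin n → Bool, prProfile (1 / 6) (1 / 6) (1 / 6) x y z
        = ∏ i, ∑ b : Bool, prTriple (1 / 6) (1 / 6) (1 / 6) (x i) b (z i) :=
    fun x => sum_y_prProfile x z
  simp only [this]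
  rw [sum_pi_prod fun i a => ∑ b : Bool, prTriple (1 / 6) (1 / 6) (1 / 6) a b (z i)]
  have h2 : ∀ i : Fin n,
      (∑ a : Bool, ∑ b : Bool, prTriple (1 / 6) (1 / 6) (1 / 6) a b (z i))
        = (1 / 2 : ℝ) := fun i => sum_ab (z i)
  simp only [h2]
  rw [Finset.prod_const, Finset.card_univ, Fintype.card_fin]

/-- Arrow's theorem in the case `p₁ + p₂ + p₃ ≤ 1`: for
non-constant Boolean choice functions with uniform preferences,
`W(f,g,h) > 0`. -/
theorem arrow_small_expectations {n : ℕ} (hn : 1 ≤ n)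
    (f g h : (Fin n → Bool) → ℝ)
    (hf : IsBooleanFn f) (hg : IsBooleanFn g) (hh : IsBooleanFn h)
    (hfc : ∃ x y, f x ≠ f y) (hgc : ∃ x y, g x ≠ g y)
    (hhc : ∃ x y, h x ≠ h y)
    (hp : expect f + expect g + expect h ≤ 1) :
    0 < W (1 / 6) (1 / 6) (1 / 6) f g h := by
  classical
  obtain ⟨x1, x2, hx⟩ := hfc
  obtain ⟨y1, y2, hy⟩ := hgc
  obtain ⟨x0, hfx0⟩ : ∃ x0, f x0 = 1 := by
    rcases hf x1 with h1 | h1 <;> rcases hf x2 with h2 | h2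
    · exact absurd (h1.trans h2.symm) hx
    · exact ⟨x2, h2⟩
    · exact ⟨x1, h1⟩
    · exact ⟨x1, h1⟩
  obtain ⟨y0, hgy0⟩ : ∃ y0, g y0 = 1 := by
    rcases hg y1 with h1 | h1 <;> rcases hg y2 with h2 | h2
    · exact absurd (h1.trans h2.symm) hy
    · exact ⟨y2, h2⟩
    · exact ⟨y1, h1⟩
    · exact ⟨y1, h1⟩
  have hf0 : ∀ x, 0 ≤ f x := fun x => by rcases hf x with h | h <;> rw [h] <;> norm_num
  have hg0 : ∀ x, 0 ≤ g x := fun x => by rcases hg x with h | h <;> rw [h] <;> norm_num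
  have hh0 : ∀ x, 0 ≤ h x := fun x => by rcases hh x with h' | h' <;> rw [h'] <;> norm_num
  have hW : W (1 / 6) (1 / 6) (1 / 6) f g h
      = (∑ x : Fin n → Bool, ∑ y : Fin n → Bool, ∑ z : Fin n → Bool,
          prProfile (1 / 6) (1 / 6) (1 / 6) x y z)
        - (∑ x : Fin n → Bool, ∑ y : Fin n → Bool, ∑ z : Fin n → Bool,
            prProfile (1 / 6) (1 / 6) (1 / 6) x y z * f x)
        - (∑ x : Fin n → Bool, ∑ y : Fin n → Bool, ∑ z : Fin n → Bool,
            prProfile (1 / 6) (1 / 6) (1 / 6) x y z * g y)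
        - (∑ x : Fin n → Bool, ∑ y : Fin n → Bool, ∑ z : Fin n → Bool,
            prProfile (1 / 6) (1 / 6) (1 / 6) x y z * h z)
        + (∑ x : Fin n → Bool, ∑ y : Fin n → Bool, ∑ z : Fin n → Bool,
            prProfile (1 / 6) (1 / 6) (1 / 6) x y z * (f x * g y))
        + (∑ x : Fin n → Bool, ∑ y : Fin n → Bool, ∑ z : Fin n → Bool,
            prProfile (1 / 6) (1 / 6) (1 / 6) x y z * (f x * h z))
        + (∑ x : Fin n → Bool, ∑ y : Fin n → Bool, ∑ z : Fin n → Bool,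
            prProfile (1 / 6) (1 / 6) (1 / 6) x y z * (g y * h z)) := by
    unfold W
    simp only [← Finset.sum_add_distrib, ← Finset.sum_sub_distrib]
    refine Finset.sum_congr rfl fun x _ => Finset.sum_congr rfl fun y _ =>
      Finset.sum_congr rfl fun z _ => ?_
    ring
  have hcard : (Fintype.card (Fin n → Bool)) = 2 ^ n := by simp
  have hA : (∑ x : Fin n → Bool, ∑ y : Fin n → Bool, ∑ z : Fin n → Bool,
      prProfile (1 / 6) (1 / 6) (1 / 6) x y z) = 1 := by
    simp only [sum_yz_prProfile]
    rw [Finset.sum_const, Finset.card_univ, hcard, nsmul_eq_mul]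
    push_cast
    rw [← mul_pow]
    norm_num
  have hB : (∑ x : Fin n → Bool, ∑ y : Fin n → Bool, ∑ z : Fin n → Bool,
      prProfile (1 / 6) (1 / 6) (1 / 6) x y z * f x) = expect f := by
    have hstep : ∀ x : Fin n → Bool,
        (∑ y : Fin n → Bool, ∑ z : Fin n → Bool,
          prProfile (1 / 6) (1 / 6) (1 / 6) x y z * f x) = (1 / 2 : ℝ) ^ n * f x := by
      intro x
      simp only [← Finset.sum_mul]
      rw [sum_yz_prProfile]
    simp only [hstep]
    rw [← Finset.mul_sum]
    rw [expect, one_div, inv_pow, inv_mul_eq_div]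
  have hC : (∑ x : Fin n → Bool, ∑ y : Fin n → Bool, ∑ z : Fin n → Bool,
      prProfile (1 / 6) (1 / 6) (1 / 6) x y z * g y) = expect g := by
    rw [Finset.sum_comm]
    have hstep : ∀ y : Fin n → Bool,
        (∑ x : Fin n → Bool, ∑ z : Fin n → Bool,
          prProfile (1 / 6) (1 / 6) (1 / 6) x y z * g y) = (1 / 2 : ℝ) ^ n * g y := by
      intro y
      simp only [← Finset.sum_mul]
      rw [sum_xz_prProfile]
    simp only [hstep]
    rw [← Finset.mul_sum]
    rw [expect, one_div, inv_pow, inv_mul_eq_div]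
  have hD : (∑ x : Fin n → Bool, ∑ y : Fin n → Bool, ∑ z : Fin n → Bool,
      prProfile (1 / 6) (1 / 6) (1 / 6) x y z * h z) = expect h := by
    have h1 : ∀ x : Fin n → Bool,
        (∑ y : Fin n → Bool, ∑ z : Fin n → Bool,
          prProfile (1 / 6) (1 / 6) (1 / 6) x y z * h z)
        = ∑ z : Fin n → Bool, ∑ y : Fin n → Bool,
            prProfile (1 / 6) (1 / 6) (1 / 6) x y z * h z := fun x => Finset.sum_comm
    simp only [h1]
    rw [Finset.sum_comm]
    have hstep : ∀ z : Fin n → Bool,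
        (∑ x : Fin n → Bool, ∑ y : Fin n → Bool,
          prProfile (1 / 6) (1 / 6) (1 / 6) x y z * h z) = (1 / 2 : ℝ) ^ n * h z := by
      intro z
      simp only [← Finset.sum_mul]
      rw [sum_xy_prProfile]
    simp only [hstep]
    rw [← Finset.mul_sum]
    rw [expect, one_div, inv_pow, inv_mul_eq_div]
  have hterm : ∀ x y : Fin n → Bool,
      0 ≤ ∑ z : Fin n → Bool,
        prProfile (1 / 6) (1 / 6) (1 / 6) x y z * (f x * g y) :=
    fun x y => Finset.sum_nonneg fun z _ =>
      mul_nonneg (prProfile_nonneg _ _ _) (mul_nonneg (hf0 x) (hg0 y))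
  have hE1 : 0 < ∑ x : Fin n → Bool, ∑ y : Fin n → Bool, ∑ z : Fin n → Bool,
      prProfile (1 / 6) (1 / 6) (1 / 6) x y z * (f x * g y) := by
    have h1 : (∑ y : Fin n → Bool, ∑ z : Fin n → Bool,
          prProfile (1 / 6) (1 / 6) (1 / 6) x0 y z * (f x0 * g y))
        ≤ ∑ x : Fin n → Bool, ∑ y : Fin n → Bool, ∑ z : Fin n → Bool,
            prProfile (1 / 6) (1 / 6) (1 / 6) x y z * (f x * g y) :=
      Finset.single_le_sum
        (fun x _ => Finset.sum_nonneg fun y _ => hterm x y) (Finset.mem_univ x0)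
    have h2 : (∑ z : Fin n → Bool,
          prProfile (1 / 6) (1 / 6) (1 / 6) x0 y0 z * (f x0 * g y0))
        ≤ ∑ y : Fin n → Bool, ∑ z : Fin n → Bool,
            prProfile (1 / 6) (1 / 6) (1 / 6) x0 y z * (f x0 * g y) :=
      Finset.single_le_sum (fun y _ => hterm x0 y) (Finset.mem_univ y0)
    have h3 : 0 < ∑ z : Fin n → Bool,
        prProfile (1 / 6) (1 / 6) (1 / 6) x0 y0 z * (f x0 * g y0) := by
      simpa [hfx0, hgy0] using sum_z_prProfile_pos x0 y0
    linarith
  have hE2 : 0 ≤ ∑ x : Fin n → Bool, ∑ y : Fin n → Bool, ∑ z : Fin n → Bool,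
      prProfile (1 / 6) (1 / 6) (1 / 6) x y z * (f x * h z) :=
    Finset.sum_nonneg fun x _ => Finset.sum_nonneg fun y _ =>
      Finset.sum_nonneg fun z _ =>
        mul_nonneg (prProfile_nonneg _ _ _) (mul_nonneg (hf0 x) (hh0 z))
  have hE3 : 0 ≤ ∑ x : Fin n → Bool, ∑ y : Fin n → Bool, ∑ z : Fin n → Bool,
      prProfile (1 / 6) (1 / 6) (1 / 6) x y z * (g y * h z) :=
    Finset.sum_nonneg fun x _ => Finset.sum_nonneg fun y _ =>
      Finset.sum_nonneg fun z _ =>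
        mul_nonneg (prProfile_nonneg _ _ _) (mul_nonneg (hg0 y) (hh0 z))
  rw [hW, hA, hB, hC, hD]
  linarith

end GSWF
end
end

section
/- Let n be odd, let f : {0,1}^n → {0,1} be the AND function f(x) = x₁·x₂·…·x_n, let g(x) = 1 − ∏_{i=1}^n (1−x_i) be its dual (the OR function), and let h = Maj_n be the majority function. If the individual preferences are independent and uniformly distributed (i.e., distributed according to D(1/6,1/6,1/6)), then the probability of irrational choice satisfies W(f,g,h) ≤ (2/9)^{n/2}. -/
open Finset Real

noncomputable section

namespace GSWF

/- ### Auxiliary lemmas for the proof -/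

section Aux
variable {n : ℕ}

private lemma sum_pi_bool (F : Fin n → Bool → ℝ) :
    ∑ y : Fin n → Bool, ∏ i, F i (y i) = ∏ i, (F i true + F i false) := by
  classical
  calc ∑ y : Fin n → Bool, ∏ i, F i (y i)
      = ∑ y ∈ Fintype.piFinset (fun _ : Fin n => (Finset.univ : Finset Bool)),
          ∏ i, F i (y i) := by rw [Fintype.piFinset_univ]
    _ = ∏ i, ∑ b ∈ (Finset.univ : Finset Bool), F i b := (Finset.prod_univ_sum _ _).symm
    _ = ∏ i, (F i true + F i false) := by
        refine Finset.prod_congr rfl fun i _ => ?_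
        simp [Fintype.sum_bool]

private lemma sum_ind (b0 : Bool) (P : Fin n → Bool → ℝ) :
    ∑ x : Fin n → Bool, (if ∀ i, x i = b0 then (1:ℝ) else 0) * ∏ i, P i (x i)
      = ∏ i, P i b0 := by
  classical
  have h1 : ∀ x : Fin n → Bool,
      (if ∀ i, x i = b0 then (1:ℝ) else 0) * ∏ i, P i (x i)
        = ∏ i, ((if x i = b0 then (1:ℝ) else 0) * P i (x i)) := by
    intro x
    rw [Finset.prod_mul_distrib]
    congr 1
    by_cases h : ∀ i, x i = b0
    · rw [if_pos h]
      exact (Finset.prod_eq_one fun i _ => by rw [if_pos (h i)]).symm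
    · rw [if_neg h]
      push_neg at h
      obtain ⟨i, hi⟩ := h
      exact (Finset.prod_eq_zero (Finset.mem_univ i) (by rw [if_neg hi])).symm
  simp_rw [h1]
  rw [sum_pi_bool (fun i b => (if b = b0 then (1:ℝ) else 0) * P i b)]
  refine Finset.prod_congr rfl fun i _ => ?_
  cases b0 <;> simp

private lemma ones_not (z : Fin n → Bool) :
    (Finset.univ.filter (fun i => (!(z i)) = true)).card
      + (Finset.univ.filter (fun i => z i = true)).card = n := by
  classical
  have : (Finset.univ.filter (fun i => (!(z i)) = true))
      = (Finset.univ.filter (fun i => ¬ (z i = true))) := by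
    apply Finset.filter_congr
    intro i _
    simp
  rw [this, add_comm, Finset.card_filter_add_card_filter_not]
  simp

private lemma ones_le (z : Fin n → Bool) :
    (Finset.univ.filter (fun i => z i = true)).card ≤ n := by
  classical
  calc (Finset.univ.filter (fun i => z i = true)).card
      ≤ (Finset.univ : Finset (Fin n)).card := Finset.card_filter_le _ _
    _ = n := by simp

end Aux

private lemma card_maj_half {m : ℕ} :
    (Finset.univ.filter (fun z : Fin (2*m+1) → Bool =>
      2*m+1 < 2 * (Finset.univ.filter (fun i => z i = true)).card)).card = 2^(2*m) := by
  classical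
  have hAB : (Finset.univ.filter (fun z : Fin (2*m+1) → Bool =>
        2*m+1 < 2 * (Finset.univ.filter (fun i => z i = true)).card)).card
      = (Finset.univ.filter (fun z : Fin (2*m+1) → Bool =>
        ¬ (2*m+1 < 2 * (Finset.univ.filter (fun i => z i = true)).card))).card := by
    apply Finset.card_bij (fun z _ => fun i => !(z i))
    · intro z hz
      simp only [Finset.mem_filter, Finset.mem_univ, true_and] at hz ⊢
      have := ones_not z
      omega
    · intro z1 h1 z2 h2 heq
      funext i
      have := congrFun heq i
      simpa using this
    · intro w hw
      simp only [Finset.mem_filter, Finset.mem_univ, true_and] at hw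
      refine ⟨fun i => !(w i), ?_, ?_⟩
      · simp only [Finset.mem_filter, Finset.mem_univ, true_and]
        have h1 := ones_not w
        have h2 := ones_le w
        omega
      · funext i; simp
  have htot : (Finset.univ.filter (fun z : Fin (2*m+1) → Bool =>
        2*m+1 < 2 * (Finset.univ.filter (fun i => z i = true)).card)).card
      + (Finset.univ.filter (fun z : Fin (2*m+1) → Bool =>
        ¬ (2*m+1 < 2 * (Finset.univ.filter (fun i => z i = true)).card))).card
      = 2^(2*m+1) := by
    rw [Finset.card_filter_add_card_filter_not]
    simp [Finset.card_univ]
  have h2 : 2^(2*m+1) = 2 * 2^(2*m) := by ring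
  rw [hAB, ← two_mul, h2] at htot
  rw [hAB]
  exact Nat.eq_of_mul_eq_mul_left (by norm_num) htot

/-- Collapse the triple sum of the `f·h` part. -/
private lemma triple_sum_fh (n : ℕ) :
    (∑ x : Fin n → Bool, ∑ y : Fin n → Bool, ∑ z : Fin n → Bool,
      prProfile (1/6 : ℝ) (1/6) (1/6) x y z * (andFn n x * maj n z))
    = ∑ z : Fin n → Bool, maj n z * ∏ i, (if z i then (1/6:ℝ) else 1/3) := by
  classical
  have h1 : (∑ x : Fin n → Bool, ∑ y : Fin n → Bool, ∑ z : Fin n → Bool,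
      prProfile (1/6 : ℝ) (1/6) (1/6) x y z * (andFn n x * maj n z))
      = ∑ z : Fin n → Bool, ∑ x : Fin n → Bool, ∑ y : Fin n → Bool,
        prProfile (1/6 : ℝ) (1/6) (1/6) x y z * (andFn n x * maj n z) := by
    rw [show (∑ x : Fin n → Bool, ∑ y : Fin n → Bool, ∑ z : Fin n → Bool,
      prProfile (1/6 : ℝ) (1/6) (1/6) x y z * (andFn n x * maj n z))
      = ∑ x : Fin n → Bool, ∑ z : Fin n → Bool, ∑ y : Fin n → Bool,
        prProfile (1/6 : ℝ) (1/6) (1/6) x y z * (andFn n x * maj n z) from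
      Finset.sum_congr rfl fun x _ => Finset.sum_comm]
    exact Finset.sum_comm
  rw [h1]
  refine Finset.sum_congr rfl fun z _ => ?_
  have h2 : ∀ x : Fin n → Bool, (∑ y : Fin n → Bool, prProfile (1/6:ℝ) (1/6) (1/6) x y z)
      = ∏ i, (prTriple (1/6:ℝ) (1/6) (1/6) (x i) true (z i)
              + prTriple (1/6:ℝ) (1/6) (1/6) (x i) false (z i)) := by
    intro x
    simp only [prProfile]
    exact sum_pi_bool (fun i b => prTriple (1/6:ℝ) (1/6) (1/6) (x i) b (z i))
  calc ∑ x : Fin n → Bool, ∑ y : Fin n → Bool,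
        prProfile (1/6 : ℝ) (1/6) (1/6) x y z * (andFn n x * maj n z)
      = ∑ x : Fin n → Bool, maj n z * ((if ∀ i, x i = true then (1:ℝ) else 0) *
          ∏ i, (prTriple (1/6:ℝ) (1/6) (1/6) (x i) true (z i)
              + prTriple (1/6:ℝ) (1/6) (1/6) (x i) false (z i))) := by
        refine Finset.sum_congr rfl fun x _ => ?_
        rw [← Finset.sum_mul, h2 x]
        simp only [andFn]
        ring
    _ = maj n z * ∏ i, (prTriple (1/6:ℝ) (1/6) (1/6) true true (z i)
              + prTriple (1/6:ℝ) (1/6) (1/6) true false (z i)) := by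
        rw [← Finset.mul_sum, sum_ind true (fun i b =>
          prTriple (1/6:ℝ) (1/6) (1/6) b true (z i)
            + prTriple (1/6:ℝ) (1/6) (1/6) b false (z i))]
    _ = maj n z * ∏ i, (if z i then (1/6:ℝ) else 1/3) := by
        congr 1
        refine Finset.prod_congr rfl fun i _ => ?_
        cases hzi : z i <;> norm_num [prTriple]

/-- Collapse the triple sum of the `(1-g)·(1-h)` part. -/
private lemma triple_sum_gh (n : ℕ) :
    (∑ x : Fin n → Bool, ∑ y : Fin n → Bool, ∑ z : Fin n → Bool,
      prProfile (1/6 : ℝ) (1/6) (1/6) x y z * ((1 - orFn n y) * (1 - maj n z)))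
    = ∑ z : Fin n → Bool, (1 - maj n z) * ∏ i, (if z i then (1/3:ℝ) else 1/6) := by
  classical
  have h1 : (∑ x : Fin n → Bool, ∑ y : Fin n → Bool, ∑ z : Fin n → Bool,
      prProfile (1/6 : ℝ) (1/6) (1/6) x y z * ((1 - orFn n y) * (1 - maj n z)))
      = ∑ z : Fin n → Bool, ∑ y : Fin n → Bool, ∑ x : Fin n → Bool,
        prProfile (1/6 : ℝ) (1/6) (1/6) x y z * ((1 - orFn n y) * (1 - maj n z)) := by
    rw [show (∑ x : Fin n → Bool, ∑ y : Fin n → Bool, ∑ z : Fin n → Bool,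
      prProfile (1/6 : ℝ) (1/6) (1/6) x y z * ((1 - orFn n y) * (1 - maj n z)))
      = ∑ x : Fin n → Bool, ∑ z : Fin n → Bool, ∑ y : Fin n → Bool,
        prProfile (1/6 : ℝ) (1/6) (1/6) x y z * ((1 - orFn n y) * (1 - maj n z)) from
      Finset.sum_congr rfl fun x _ => Finset.sum_comm]
    rw [Finset.sum_comm]
    exact Finset.sum_congr rfl fun z _ => Finset.sum_comm
  rw [h1]
  refine Finset.sum_congr rfl fun z _ => ?_
  have h2 : ∀ y : Fin n → Bool, (∑ x : Fin n → Bool, prProfile (1/6:ℝ) (1/6) (1/6) x y z)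
      = ∏ i, (prTriple (1/6:ℝ) (1/6) (1/6) true (y i) (z i)
              + prTriple (1/6:ℝ) (1/6) (1/6) false (y i) (z i)) := by
    intro y
    simp only [prProfile]
    exact sum_pi_bool (fun i b => prTriple (1/6:ℝ) (1/6) (1/6) b (y i) (z i))
  have horF : ∀ y : Fin n → Bool,
      (1 : ℝ) - orFn n y = if ∀ i, y i = false then 1 else 0 := by
    intro y
    simp only [orFn]
    by_cases h : ∃ i, y i = true
    · rw [if_pos h, if_neg]
      · ring
      · intro hall
        obtain ⟨i, hi⟩ := h
        rw [hall i] at hi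
        exact Bool.noConfusion hi
    · rw [if_neg h, if_pos]
      · ring
      · intro i
        cases hyi : y i
        · rfl
        · exact absurd ⟨i, hyi⟩ h
  calc ∑ y : Fin n → Bool, ∑ x : Fin n → Bool,
        prProfile (1/6 : ℝ) (1/6) (1/6) x y z * ((1 - orFn n y) * (1 - maj n z))
      = ∑ y : Fin n → Bool, (1 - maj n z) * ((if ∀ i, y i = false then (1:ℝ) else 0) *
          ∏ i, (prTriple (1/6:ℝ) (1/6) (1/6) true (y i) (z i)
              + prTriple (1/6:ℝ) (1/6) (1/6) false (y i) (z i))) := by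
        refine Finset.sum_congr rfl fun y _ => ?_
        rw [← Finset.sum_mul, h2 y, horF y]
        ring
    _ = (1 - maj n z) * ∏ i, (prTriple (1/6:ℝ) (1/6) (1/6) true false (z i)
              + prTriple (1/6:ℝ) (1/6) (1/6) false false (z i)) := by
        rw [← Finset.mul_sum, sum_ind false (fun i b =>
          prTriple (1/6:ℝ) (1/6) (1/6) true b (z i)
            + prTriple (1/6:ℝ) (1/6) (1/6) false b (z i))]
    _ = (1 - maj n z) * ∏ i, (if z i then (1/3:ℝ) else 1/6) := by
        congr 1
        refine Finset.prod_congr rfl fun i _ => ?_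
        cases hzi : z i <;> norm_num [prTriple]

/-- For a boolean `z`-profile in the majority set, the product weight is small. -/
private lemma prod_weight_bound_one {m : ℕ} (z : Fin (2*m+1) → Bool)
    (hz : 2*m+1 < 2 * (Finset.univ.filter (fun i => z i = true)).card) :
    (∏ i, (if z i then (1/6:ℝ) else 1/3)) ≤ (1/3:ℝ)^(2*m+1) * (1/2)^(m+1) := by
  classical
  set k := (Finset.univ.filter (fun i => z i = true)).card with hk
  have hkn : k ≤ 2*m+1 := ones_le z
  have hprod : (∏ i, (if z i then (1/6:ℝ) else 1/3))
      = (1/6:ℝ)^k * (1/3)^(2*m+1-k) := by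
    rw [Finset.prod_ite]
    rw [Finset.prod_const, Finset.prod_const]
    congr 2
    have := Finset.card_filter_add_card_filter_not
      (s := (Finset.univ : Finset (Fin (2*m+1)))) (p := fun i => z i = true)
    simp only [Finset.card_univ, Fintype.card_fin] at this
    omega
  rw [hprod]
  have h6 : (1/6:ℝ)^k = (1/3:ℝ)^k * (1/2:ℝ)^k := by
    rw [← mul_pow]; norm_num
  have h3 : (1/3:ℝ)^k * (1/3:ℝ)^(2*m+1-k) = (1/3:ℝ)^(2*m+1) := by
    rw [← pow_add]; congr 1; omega
  have h2 : (1/2:ℝ)^k ≤ (1/2:ℝ)^(m+1) := by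
    apply pow_le_pow_of_le_one (by norm_num) (by norm_num)
    omega
  calc (1/6:ℝ)^k * (1/3)^(2*m+1-k)
      = ((1/3:ℝ)^k * (1/3:ℝ)^(2*m+1-k)) * (1/2:ℝ)^k := by rw [h6]; ring
    _ = (1/3:ℝ)^(2*m+1) * (1/2:ℝ)^k := by rw [h3]
    _ ≤ (1/3:ℝ)^(2*m+1) * (1/2:ℝ)^(m+1) :=
        mul_le_mul_of_nonneg_left h2 (by positivity)

private lemma prod_weight_bound_two {m : ℕ} (z : Fin (2*m+1) → Bool)
    (hz : ¬ (2*m+1 < 2 * (Finset.univ.filter (fun i => z i = true)).card)) :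
    (∏ i, (if z i then (1/3:ℝ) else 1/6)) ≤ (1/3:ℝ)^(2*m+1) * (1/2)^(m+1) := by
  classical
  set k := (Finset.univ.filter (fun i => z i = true)).card with hk
  have hkn : k ≤ 2*m+1 := ones_le z
  have hprod : (∏ i, (if z i then (1/3:ℝ) else 1/6))
      = (1/3:ℝ)^k * (1/6)^(2*m+1-k) := by
    rw [Finset.prod_ite]
    rw [Finset.prod_const, Finset.prod_const]
    congr 2
    have := Finset.card_filter_add_card_filter_not
      (s := (Finset.univ : Finset (Fin (2*m+1)))) (p := fun i => z i = true)
    simp only [Finset.card_univ, Fintype.card_fin] at this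
    omega
  rw [hprod]
  have h6 : (1/6:ℝ)^(2*m+1-k) = (1/3:ℝ)^(2*m+1-k) * (1/2:ℝ)^(2*m+1-k) := by
    rw [← mul_pow]; norm_num
  have h3 : (1/3:ℝ)^k * (1/3:ℝ)^(2*m+1-k) = (1/3:ℝ)^(2*m+1) := by
    rw [← pow_add]; congr 1; omega
  have h2 : (1/2:ℝ)^(2*m+1-k) ≤ (1/2:ℝ)^(m+1) := by
    apply pow_le_pow_of_le_one (by norm_num) (by norm_num)
    omega
  calc (1/3:ℝ)^k * (1/6)^(2*m+1-k)
      = ((1/3:ℝ)^k * (1/3:ℝ)^(2*m+1-k)) * (1/2:ℝ)^(2*m+1-k) := by rw [h6]; ring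
    _ = (1/3:ℝ)^(2*m+1) * (1/2:ℝ)^(2*m+1-k) := by rw [h3]
    _ ≤ (1/3:ℝ)^(2*m+1) * (1/2:ℝ)^(m+1) :=
        mul_le_mul_of_nonneg_left h2 (by positivity)

/-- for odd `n`, the GSWF with choice functions AND, OR, and
majority, with uniform preferences, satisfies `W(f,g,h) ≤ (2/9)^{n/2}`. -/
theorem and_or_majority_irrationality {n : ℕ} (hodd : Odd n) :
    W (1 / 6) (1 / 6) (1 / 6) (andFn n) (orFn n) (maj n) ≤
      ((2 : ℝ) / 9) ^ ((n : ℝ) / 2) := by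
  classical
  obtain ⟨m, rfl⟩ := hodd
  set N := 2*m+1 with hN
  have hpr : ∀ x y z : Fin N → Bool, 0 ≤ prProfile (1/6:ℝ) (1/6) (1/6) x y z := by
    intro x y z
    apply Finset.prod_nonneg
    intro i _
    cases hx : x i <;> cases hy : y i <;> cases hz : z i <;> norm_num [prTriple]
  have hand : ∀ x : Fin N → Bool, 0 ≤ andFn N x ∧ andFn N x ≤ 1 := by
    intro x; unfold andFn; split <;> norm_num
  have hor : ∀ x : Fin N → Bool, 0 ≤ orFn N x ∧ orFn N x ≤ 1 := by
    intro x; unfold orFn; split <;> norm_num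
  have hmaj : ∀ x : Fin N → Bool, 0 ≤ maj N x ∧ maj N x ≤ 1 := by
    intro x; unfold maj; split <;> norm_num
  -- Step 1: bound W by the two triple sums
  have step1 : W (1/6 : ℝ) (1/6) (1/6) (andFn N) (orFn N) (maj N) ≤
      (∑ x : Fin N → Bool, ∑ y : Fin N → Bool, ∑ z : Fin N → Bool,
        prProfile (1/6 : ℝ) (1/6) (1/6) x y z * (andFn N x * maj N z))
      + (∑ x : Fin N → Bool, ∑ y : Fin N → Bool, ∑ z : Fin N → Bool,
        prProfile (1/6 : ℝ) (1/6) (1/6) x y z * ((1 - orFn N y) * (1 - maj N z))) := by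
    rw [← Finset.sum_add_distrib]
    unfold W
    refine Finset.sum_le_sum fun x _ => ?_
    rw [← Finset.sum_add_distrib]
    refine Finset.sum_le_sum fun y _ => ?_
    rw [← Finset.sum_add_distrib]
    refine Finset.sum_le_sum fun z _ => ?_
    obtain ⟨hf0, hf1⟩ := hand x
    obtain ⟨hg0, hg1⟩ := hor y
    obtain ⟨hh0, hh1⟩ := hmaj z
    have hp := hpr x y z
    nlinarith [mul_nonneg (mul_nonneg hp (mul_nonneg hf0 hh0)) (sub_nonneg.2 hg1),
      mul_nonneg (mul_nonneg hp hf0)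
        (mul_nonneg (sub_nonneg.2 hg1) (sub_nonneg.2 hh1))]
  -- Step 2: rewrite the two triple sums and bound them
  rw [triple_sum_fh, triple_sum_gh] at step1
  have c_nonneg : (0:ℝ) ≤ (1/3:ℝ)^N * (1/2)^(m+1) := by positivity
  have bound1 : (∑ z : Fin N → Bool, maj N z * ∏ i, (if z i then (1/6:ℝ) else 1/3))
      ≤ (2^(2*m) : ℕ) * ((1/3:ℝ)^N * (1/2)^(m+1)) := by
    have e1 : (∑ z : Fin N → Bool, maj N z * ∏ i, (if z i then (1/6:ℝ) else 1/3))
        = ∑ z ∈ Finset.univ.filter (fun z : Fin N → Bool =>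
            N < 2 * (Finset.univ.filter (fun i => z i = true)).card),
          ∏ i, (if z i then (1/6:ℝ) else 1/3) := by
      rw [Finset.sum_filter]
      refine Finset.sum_congr rfl fun z _ => ?_
      simp only [maj]
      split <;> ring
    rw [e1]
    calc (∑ z ∈ Finset.univ.filter (fun z : Fin N → Bool =>
            N < 2 * (Finset.univ.filter (fun i => z i = true)).card),
          ∏ i, (if z i then (1/6:ℝ) else 1/3))
        ≤ ∑ _z ∈ Finset.univ.filter (fun z : Fin N → Bool =>
            N < 2 * (Finset.univ.filter (fun i => z i = true)).card),
          ((1/3:ℝ)^N * (1/2)^(m+1)) := by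
          refine Finset.sum_le_sum fun z hz => ?_
          simp only [Finset.mem_filter, Finset.mem_univ, true_and] at hz
          exact prod_weight_bound_one z hz
      _ = (2^(2*m) : ℕ) * ((1/3:ℝ)^N * (1/2)^(m+1)) := by
          rw [Finset.sum_const, card_maj_half, nsmul_eq_mul]
  have bound2 : (∑ z : Fin N → Bool, (1 - maj N z) * ∏ i, (if z i then (1/3:ℝ) else 1/6))
      ≤ (2^(2*m) : ℕ) * ((1/3:ℝ)^N * (1/2)^(m+1)) := by
    have e2 : (∑ z : Fin N → Bool, (1 - maj N z) * ∏ i, (if z i then (1/3:ℝ) else 1/6))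
        = ∑ z ∈ Finset.univ.filter (fun z : Fin N → Bool =>
            ¬ (N < 2 * (Finset.univ.filter (fun i => z i = true)).card)),
          ∏ i, (if z i then (1/3:ℝ) else 1/6) := by
      rw [Finset.sum_filter]
      refine Finset.sum_congr rfl fun z _ => ?_
      simp only [maj]
      split <;> ring
    rw [e2]
    have hcard2 : (Finset.univ.filter (fun z : Fin N → Bool =>
        ¬ (N < 2 * (Finset.univ.filter (fun i => z i = true)).card))).card = 2^(2*m) := by
      have htot : (Finset.univ.filter (fun z : Fin N → Bool =>
            N < 2 * (Finset.univ.filter (fun i => z i = true)).card)).card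
          + (Finset.univ.filter (fun z : Fin N → Bool =>
            ¬ (N < 2 * (Finset.univ.filter (fun i => z i = true)).card))).card
          = 2^N := by
        rw [Finset.card_filter_add_card_filter_not]
        simp [Finset.card_univ]
      rw [card_maj_half] at htot
      have h2 : (2:ℕ)^N = 2^(2*m) + 2^(2*m) := by rw [hN]; ring
      rw [h2] at htot
      exact Nat.add_left_cancel htot
    calc (∑ z ∈ Finset.univ.filter (fun z : Fin N → Bool =>
            ¬ (N < 2 * (Finset.univ.filter (fun i => z i = true)).card)),
          ∏ i, (if z i then (1/3:ℝ) else 1/6))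
        ≤ ∑ _z ∈ Finset.univ.filter (fun z : Fin N → Bool =>
            ¬ (N < 2 * (Finset.univ.filter (fun i => z i = true)).card)),
          ((1/3:ℝ)^N * (1/2)^(m+1)) := by
          refine Finset.sum_le_sum fun z hz => ?_
          simp only [Finset.mem_filter, Finset.mem_univ, true_and] at hz
          exact prod_weight_bound_two z hz
      _ = (2^(2*m) : ℕ) * ((1/3:ℝ)^N * (1/2)^(m+1)) := by
          rw [Finset.sum_const, hcard2, nsmul_eq_mul]
  -- Step 3: final arithmetic
  have step3 : (2^(2*m) : ℕ) * ((1/3:ℝ)^N * (1/2)^(m+1))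
      + (2^(2*m) : ℕ) * ((1/3:ℝ)^N * (1/2)^(m+1))
      ≤ ((2 : ℝ) / 9) ^ ((N : ℝ) / 2) := by
    have hcast : ((2^(2*m) : ℕ) : ℝ) = (2:ℝ)^(2*m) := by push_cast; ring
    have h4 : (2:ℝ)^(2*m) = (4:ℝ)^m := by rw [pow_mul]; norm_num
    have h9 : (1/3:ℝ)^N = (1/9:ℝ)^m * (1/3) := by
      rw [hN, pow_succ, pow_mul]; norm_num
    have h2 : (1/2:ℝ)^(m+1) = (1/2:ℝ)^m * (1/2) := pow_succ _ _
    have hmul : (4:ℝ)^m * (1/9:ℝ)^m * (1/2:ℝ)^m = ((2:ℝ)/9)^m := by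
      rw [← mul_pow, ← mul_pow]; norm_num
    have lhs_eq : (2^(2*m) : ℕ) * ((1/3:ℝ)^N * (1/2)^(m+1))
        + (2^(2*m) : ℕ) * ((1/3:ℝ)^N * (1/2)^(m+1))
        = ((2:ℝ)/9)^m * (1/3) := by
      rw [hcast, h4, h9, h2, ← hmul]; ring
    rw [lhs_eq]
    have hNr : ((N : ℕ) : ℝ) = 2*(m:ℝ)+1 := by rw [hN]; push_cast; ring
    have hsplit : ((2:ℝ)/9) ^ ((N : ℝ) / 2)
        = ((2:ℝ)/9) ^ ((m:ℝ)) * ((2:ℝ)/9) ^ ((1:ℝ)/2) := by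
      rw [← Real.rpow_add (by norm_num : (0:ℝ) < 2/9)]
      rw [hNr]
      congr 1
      ring
    have hnat : ((2:ℝ)/9) ^ ((m:ℝ)) = ((2:ℝ)/9)^m := Real.rpow_natCast _ m
    have hsq : (1/3:ℝ) ≤ ((2:ℝ)/9) ^ ((1:ℝ)/2) := by
      calc (1/3:ℝ) = Real.sqrt ((1/3)^2) := (Real.sqrt_sq (by norm_num)).symm
        _ = Real.sqrt (1/9) := by norm_num
        _ ≤ Real.sqrt (2/9) := Real.sqrt_le_sqrt (by norm_num)
        _ = ((2:ℝ)/9) ^ ((1:ℝ)/2) := Real.sqrt_eq_rpow _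
    rw [hsplit, hnat]
    exact mul_le_mul_of_nonneg_left hsq (by positivity)
  calc W (1/6 : ℝ) (1/6) (1/6) (andFn N) (orFn N) (maj N)
      ≤ _ := step1
    _ ≤ (2^(2*m) : ℕ) * ((1/3:ℝ)^N * (1/2)^(m+1))
        + (2^(2*m) : ℕ) * ((1/3:ℝ)^N * (1/2)^(m+1)) := add_le_add bound1 bound2
    _ ≤ ((2 : ℝ) / 9) ^ ((N : ℝ) / 2) := step3

end GSWF
end
end
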